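/- arXiv:1803.00669 — 3 statements merged into one kernel-verified Lean document; each statement's English description precedes it below -/
import Mathlib

section
/- Let $p$ be an odd prime, $r \in \mathbb{N}$, $\sigma_j = ((j{-}1)p{+}1\ \ldots\ jp)(\overline{(j{-}1)p{+}1}\ \ldots\ \overline{jp})$ for $1\le j\le r$, and $R_r = \langle \sigma_1\sigma_2\cdots\sigma_r\rangle \le C_2\wr S_{rp}$. Then the centraliser $C_{C_2\wr S_{rp}}(R_r)$ is isomorphic as an abstract group to $C_{2p} \wr S_r$. -/
/-- The bar involution. -/
def barPerm (α : Type*) : Equiv.Perm (α × Bool) :=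
  Function.Involutive.toPerm (fun x => (x.1, !x.2)) (by intro x; simp)

/-- The permutation `σ₁σ₂⋯σ_r` rotating each of the `r` blocks of size `p`. -/
def rotBlocks (r p : ℕ) : Equiv.Perm ((Fin r × Fin p) × Bool) :=
  Equiv.prodCongr (Equiv.prodCongr (Equiv.refl (Fin r)) (finRotate p)) (Equiv.refl Bool)

/-- The coordinate-permuting action of `Perm (Fin r)` on `Fin r → G`. -/
def permAut (G : Type*) [Group G] (r : ℕ) : Equiv.Perm (Fin r) →* MulAut (Fin r → G) where
  toFun σ :=
    { toFun := fun f => f ∘ σ.symm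
      invFun := fun f => f ∘ σ
      left_inv := fun f => by funext x; simp
      right_inv := fun f => by funext x; simp
      map_mul' := fun f g => rfl }
  map_one' := by ext f x; rfl
  map_mul' := fun σ τ => by ext f x; rfl

/-- The abstract wreath product `G ≀ S_r`. -/
abbrev Wreath (G : Type*) [Group G] (r : ℕ) :=
  SemidirectProduct (Fin r → G) (Equiv.Perm (Fin r)) (permAut G r)

/-! ### Auxiliary material -/

open Equiv

/-- `permCongr` as a `MulEquiv`. -/
def permMulEquiv {α β : Type*} (e : α ≃ β) : Equiv.Perm α ≃* Equiv.Perm β :=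
  { e.permCongr with
    map_mul' := fun p q => by
      ext x
      simp [Equiv.permCongr_apply, Equiv.Perm.mul_apply] }

lemma permMulEquiv_apply {α β : Type*} (e : α ≃ β) (p : Equiv.Perm α) (x : β) :
    permMulEquiv e p x = e (p (e.symm x)) := rfl

lemma map_centralizer {G H : Type*} [Group G] [Group H] (φ : G ≃* H) (S : Set G) :
    (Subgroup.centralizer S).map (φ : G →* H) = Subgroup.centralizer (φ '' S) := by
  ext h
  simp only [Subgroup.mem_map, Subgroup.mem_centralizer_iff, Set.mem_image]
  constructor
  · rintro ⟨g, hg, rfl⟩ y ⟨x, hx, rfl⟩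
    have : (φ : G →* H) (x * g) = (φ : G →* H) (g * x) := by rw [hg x hx]
    simpa [map_mul] using this
  · intro hcomm
    refine ⟨φ.symm h, fun x hx => ?_, by simp⟩
    have := hcomm (φ x) ⟨x, hx, rfl⟩
    apply φ.injective
    simpa [map_mul] using this

/-- The centralizer of `S` is isomorphic to the centralizer of `φ '' S`. -/
noncomputable def centralizerCongr {G H : Type*} [Group G] [Group H] (φ : G ≃* H) (S : Set G) :
    Subgroup.centralizer S ≃* Subgroup.centralizer (φ '' S) :=
  (φ.subgroupMap (Subgroup.centralizer S)).trans
    (MulEquiv.subgroupCongr (map_centralizer φ S))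

section Generic

variable {A : Type*} [AddCommGroup A] {r : ℕ}

/-- Translation by `a` in the second coordinate. -/
def transPerm (r : ℕ) (a : A) : Equiv.Perm (Fin r × A) :=
  Equiv.prodCongr (Equiv.refl _) (Equiv.addRight a)

@[simp] lemma transPerm_apply (a : A) (x : Fin r × A) :
    transPerm r a x = (x.1, x.2 + a) := rfl

lemma transPerm_add (a b : A) :
    transPerm r (a + b) = transPerm r a * transPerm r b := by
  ext x
  · rfl
  · simp only [transPerm_apply, Equiv.Perm.mul_apply]
    abel

lemma transPerm_zero : (transPerm r (0 : A)) = 1 := by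
  ext x <;> simp

lemma transPerm_neg (a : A) : transPerm r (-a) = (transPerm r a)⁻¹ := by
  rw [eq_inv_iff_mul_eq_one, ← transPerm_add, neg_add_cancel, transPerm_zero]

/-- The homomorphism from the wreath product into `Perm (Fin r × A)`. -/
def wreathHom (A : Type*) [AddCommGroup A] (r : ℕ) :
    Wreath (Multiplicative A) r →* Equiv.Perm (Fin r × A) where
  toFun g :=
    { toFun := fun x => (g.right x.1, x.2 + Multiplicative.toAdd (g.left (g.right x.1)))
      invFun := fun x => (g.right⁻¹ x.1, x.2 - Multiplicative.toAdd (g.left x.1))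
      left_inv := fun x => by simp
      right_inv := fun x => by simp }
  map_one' := by ext x <;> simp
  map_mul' g h := by
    ext x
    · rfl
    · show x.2 + Multiplicative.toAdd (((g * h).left) ((g.right * h.right) x.1)) = _
      rw [SemidirectProduct.mul_left]
      show x.2 + Multiplicative.toAdd
          (g.left (g.right (h.right x.1)) *
            (permAut (Multiplicative A) r g.right h.left) (g.right (h.right x.1))) = _
      show x.2 + Multiplicative.toAdd
          (g.left (g.right (h.right x.1)) * h.left (g.right.symm (g.right (h.right x.1)))) = _
      rw [Equiv.symm_apply_apply]
      show _ = (x.2 + Multiplicative.toAdd (h.left (h.right x.1))) +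
        Multiplicative.toAdd (g.left (g.right (h.right x.1)))
      rw [toAdd_mul]
      abel

lemma wreathHom_apply (g : Wreath (Multiplicative A) r) (x : Fin r × A) :
    wreathHom A r g x = (g.right x.1, x.2 + Multiplicative.toAdd (g.left (g.right x.1))) := rfl

lemma wreathHom_injective : Function.Injective (wreathHom A r) := by
  intro g h hgh
  have key : ∀ x : Fin r × A,
      (g.right x.1, x.2 + Multiplicative.toAdd (g.left (g.right x.1))) =
      (h.right x.1, x.2 + Multiplicative.toAdd (h.left (h.right x.1))) := by
    intro x
    have := congrArg (fun e => e x) hgh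
    simpa [wreathHom_apply] using this
  have hright : g.right = h.right := Equiv.ext fun j => congrArg Prod.fst (key (j, 0))
  have hleft : g.left = h.left := by
    funext j
    have := congrArg Prod.snd (key (g.right⁻¹ j, 0))
    rw [hright] at this
    simp only [Equiv.Perm.inv_def, Equiv.apply_symm_apply, zero_add] at this
    exact Multiplicative.toAdd.injective this
  cases g; cases h
  simp_all

lemma mem_range_wreathHom {g : Equiv.Perm (Fin r × A)}
    (hg : ∀ a : A, Commute g (transPerm r a)) : g ∈ (wreathHom A r).range := by
  have hkey : ∀ (x : Fin r × A) (a : A), g (x.1, x.2 + a) = ((g x).1, (g x).2 + a) := by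
    intro x a
    have := congrArg (fun e => e x) (hg a)
    simpa [Equiv.Perm.mul_apply] using this
  have hkeyinv : ∀ (x : Fin r × A) (a : A), g⁻¹ (x.1, x.2 + a) = ((g⁻¹ x).1, (g⁻¹ x).2 + a) := by
    intro x a
    have := congrArg (fun e => e x) ((hg a).inv_left)
    simpa [Equiv.Perm.mul_apply] using this
  -- structure of g
  have hshape : ∀ j : Fin r, ∀ x : A, g (j, x) = ((g (j, 0)).1, (g (j, 0)).2 + x) := by
    intro j x
    have := hkey (j, 0) x
    simpa using this
  have hshapeinv : ∀ j : Fin r, ∀ x : A, g⁻¹ (j, x) = ((g⁻¹ (j, 0)).1, (g⁻¹ (j, 0)).2 + x) := by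
    intro j x
    have := hkeyinv (j, 0) x
    simpa using this
  have hinvfst : ∀ j : Fin r, (g⁻¹ ((g (j, 0)).1, 0)).1 = j := by
    intro j
    have h1 : g⁻¹ ((g (j, 0)).1, (g (j, 0)).2 + (-(g (j, 0)).2)) =
        ((g⁻¹ (g (j, 0))).1, (g⁻¹ (g (j, 0))).2 + (-(g (j, 0)).2)) := by
      rw [hkeyinv (g (j, 0)) (-(g (j, 0)).2)]
    simp only [add_neg_cancel, Equiv.Perm.inv_def, Equiv.symm_apply_apply] at h1
    rw [Equiv.Perm.inv_def, h1]
  have hfstinv : ∀ j : Fin r, (g ((g⁻¹ (j, 0)).1, 0)).1 = j := by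
    intro j
    have h1 : g ((g⁻¹ (j, 0)).1, (g⁻¹ (j, 0)).2 + (-(g⁻¹ (j, 0)).2)) =
        ((g (g⁻¹ (j, 0))).1, (g (g⁻¹ (j, 0))).2 + (-(g⁻¹ (j, 0)).2)) := by
      rw [hkey (g⁻¹ (j, 0)) (-(g⁻¹ (j, 0)).2)]
    simp only [add_neg_cancel, Equiv.Perm.inv_def, Equiv.apply_symm_apply] at h1
    rw [Equiv.Perm.inv_def, h1]
  set σ : Equiv.Perm (Fin r) :=
    { toFun := fun j => (g (j, 0)).1
      invFun := fun j => (g⁻¹ (j, 0)).1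
      left_inv := hinvfst
      right_inv := hfstinv } with hσ
  refine ⟨⟨fun j => Multiplicative.ofAdd ((g (σ.symm j, 0)).2), σ⟩, ?_⟩
  apply Equiv.ext
  intro x
  refine Prod.ext ?_ ?_
  · show σ x.1 = (g x).1
    rw [show x = (x.1, x.2) from rfl, hshape x.1 x.2]
    rfl
  · show x.2 + (g (σ.symm (σ x.1), 0)).2 = (g x).2
    rw [Equiv.symm_apply_apply]
    rw [show x = (x.1, x.2) from rfl, hshape x.1 x.2]
    show x.2 + (g (x.1, 0)).2 = (g (x.1, 0)).2 + x.2
    abel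

lemma commute_of_closure {g : Equiv.Perm (Fin r × A)} (a₁ a₂ : A)
    (h : AddSubgroup.closure ({a₁, a₂} : Set A) = ⊤)
    (h1 : Commute g (transPerm r a₁)) (h2 : Commute g (transPerm r a₂)) :
    ∀ a : A, Commute g (transPerm r a) := by
  intro a
  have ha : a ∈ AddSubgroup.closure ({a₁, a₂} : Set A) := by rw [h]; trivial
  induction ha using AddSubgroup.closure_induction with
  | mem x hx =>
    rcases hx with hx | hx
    · subst hx; exact h1
    · rw [Set.mem_singleton_iff] at hx; subst hx; exact h2
  | zero => rw [transPerm_zero]; exact Commute.one_right g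
  | add x y _ _ hx hy => rw [transPerm_add]; exact hx.mul_right hy
  | neg x _ hx => rw [transPerm_neg]; exact hx.inv_right

lemma range_wreathHom (a₁ a₂ : A) (h : AddSubgroup.closure ({a₁, a₂} : Set A) = ⊤) :
    (wreathHom A r).range =
      Subgroup.centralizer {transPerm r a₁, transPerm r a₂} := by
  apply le_antisymm
  · rintro g ⟨w, rfl⟩
    rw [Subgroup.mem_centralizer_iff]
    intro t ht
    have key : ∀ a : A, transPerm r a * wreathHom A r w = wreathHom A r w * transPerm r a := by
      intro a
      ext x
      · rfl
      · simp only [Equiv.Perm.mul_apply, wreathHom_apply, transPerm_apply]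
        abel
    rcases ht with ht | ht
    · subst ht; exact key a₁
    · rw [Set.mem_singleton_iff] at ht; subst ht; exact key a₂
  · intro g hg
    rw [Subgroup.mem_centralizer_iff] at hg
    have h1 : Commute g (transPerm r a₁) := (hg _ (by simp)).symm
    have h2 : Commute g (transPerm r a₂) := (hg _ (by simp)).symm
    exact mem_range_wreathHom (commute_of_closure a₁ a₂ h h1 h2)

/-- The generic isomorphism. -/
noncomputable def centralizerIsoWreath (a₁ a₂ : A)
    (h : AddSubgroup.closure ({a₁, a₂} : Set A) = ⊤) :
    (Subgroup.centralizer {transPerm r a₁, transPerm r a₂} :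
      Subgroup (Equiv.Perm (Fin r × A))) ≃* Wreath (Multiplicative A) r :=
  ((MonoidHom.ofInjective (wreathHom_injective (A := A) (r := r))).trans
    (MulEquiv.subgroupCongr (range_wreathHom a₁ a₂ h))).symm

end Generic

/-! ### Instantiation -/

/-- `C_{C₂≀S_{rp}}(R_r) ≅ C_{2p} ≀ S_r`. -/
theorem centralizer_Rr_iso (p r : ℕ) (hp : p.Prime) (hodd : Odd p) :
    Nonempty
      ((Subgroup.centralizer {barPerm (Fin r × Fin p), rotBlocks r p} :
          Subgroup (Equiv.Perm ((Fin r × Fin p) × Bool))) ≃*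
        Wreath (Multiplicative (ZMod (2 * p))) r) := by
  obtain ⟨n, rfl⟩ : ∃ n, p = n + 1 := ⟨p - 1, by have := hp.pos; omega⟩
  haveI : NeZero (2 * (n + 1)) := ⟨by omega⟩
  have hcop : Nat.Coprime 2 (n + 1) := by
    rw [Nat.Prime.coprime_iff_not_dvd Nat.prime_two]
    intro hdvd
    rcases hodd with ⟨k, hk⟩
    rcases hdvd with ⟨m, hm⟩
    omega
  let crt := ZMod.chineseRemainder hcop
  let a₁ : ZMod (2 * (n + 1)) := crt.symm (1, 0)
  let a₂ : ZMod (2 * (n + 1)) := crt.symm (0, 1)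
  let bEquiv : Bool ≃ ZMod 2 :=
    ⟨fun ε => if ε then 1 else 0, fun x => decide (x = 1), by decide, by decide⟩
  let finz : Fin (n + 1) ≃ ZMod (n + 1) := Equiv.refl (Fin (n + 1))
  let c : Fin (n + 1) × Bool ≃ ZMod (2 * (n + 1)) :=
    ((Equiv.prodComm _ _).trans (Equiv.prodCongr bEquiv finz)).trans crt.toEquiv.symm
  have hc1 : ∀ (i : Fin (n + 1)) (ε : Bool), c (i, !ε) = c (i, ε) + a₁ := by
    intro i ε
    show crt.symm (bEquiv (!ε), finz i) = crt.symm (bEquiv ε, finz i) + crt.symm (1, 0)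
    rw [← map_add]
    have hb : bEquiv (!ε) = bEquiv ε + 1 := by cases ε <;> decide
    congr 1
    rw [Prod.mk_add_mk, add_zero, hb]
  have hc2 : ∀ (i : Fin (n + 1)) (ε : Bool), c (finRotate (n + 1) i, ε) = c (i, ε) + a₂ := by
    intro i ε
    show crt.symm (bEquiv ε, finz (finRotate (n + 1) i)) =
      crt.symm (bEquiv ε, finz i) + crt.symm (0, 1)
    rw [← map_add]
    congr 1
    rw [Prod.mk_add_mk, add_zero, finRotate_succ_apply]
    rfl
  have hsum : a₁ + a₂ = 1 := by
    show crt.symm (1, 0) + crt.symm (0, 1) = 1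
    rw [← map_add]
    have h11 : ((1 : ZMod 2), (0 : ZMod (n + 1))) + ((0 : ZMod 2), (1 : ZMod (n + 1))) = 1 := by
      simp [Prod.ext_iff]
    rw [h11, map_one]
  have hclo : AddSubgroup.closure ({a₁, a₂} : Set (ZMod (2 * (n + 1)))) = ⊤ := by
    rw [eq_top_iff]
    intro x _
    have h1 : (1 : ZMod (2 * (n + 1))) ∈ AddSubgroup.closure ({a₁, a₂} : Set _) := by
      rw [← hsum]
      exact add_mem (AddSubgroup.subset_closure (by simp)) (AddSubgroup.subset_closure (by simp))
    have hx : x = x.val • (1 : ZMod (2 * (n + 1))) := by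
      simp [nsmul_eq_mul, ZMod.natCast_rightInverse x]
    rw [hx]
    exact AddSubgroup.nsmul_mem _ h1 _
  let e : (Fin r × Fin (n + 1)) × Bool ≃ Fin r × ZMod (2 * (n + 1)) :=
    (Equiv.prodAssoc _ _ _).trans (Equiv.prodCongr (Equiv.refl (Fin r)) c)
  have hbar : permMulEquiv e (barPerm (Fin r × Fin (n + 1))) = transPerm r a₁ := by
    apply Equiv.ext
    rintro ⟨j, y⟩
    show (j, c ((c.symm y).1, !(c.symm y).2)) = (j, y + a₁)
    rw [hc1, Prod.mk.eta, Equiv.apply_symm_apply]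
  have hrot : permMulEquiv e (rotBlocks r (n + 1)) = transPerm r a₂ := by
    apply Equiv.ext
    rintro ⟨j, y⟩
    show (j, c (finRotate (n + 1) (c.symm y).1, (c.symm y).2)) = (j, y + a₂)
    rw [hc2, Prod.mk.eta, Equiv.apply_symm_apply]
  have himg : (permMulEquiv e) ''
      ({barPerm (Fin r × Fin (n + 1)), rotBlocks r (n + 1)} :
        Set (Equiv.Perm ((Fin r × Fin (n + 1)) × Bool))) =
      {transPerm r a₁, transPerm r a₂} := by
    rw [Set.image_insert_eq, Set.image_singleton, hbar, hrot]
  exact ⟨(centralizerCongr (permMulEquiv e) _).trans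
    ((MulEquiv.subgroupCongr (by rw [himg])).trans (centralizerIsoWreath a₁ a₂ hclo))⟩
end

section
/- Let $p$ be an odd prime, $r = 2s+t+u$, and $R_r \le C_2\wr S_{rp}$ the cyclic group of order $p$ generated by $\sigma_1\cdots\sigma_r$. Then the dimension of the Brauer quotient $M_{(2sp,tp,up)}(R_r)$ over a field of characteristic $p$ equals $(2p)^s \cdot \binom{t+u}{t} \cdot c_{s,t+u}$, where $c_{s,k}$ is the number of set partitions of $\{1,\ldots,2s+k\}$ into $s$ unordered pairs together with one distinguished block of size $k$. -/
/-- The rotation on the index set `Fin r × Fin p`. -/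
def rotIdx (r p : ℕ) : Equiv.Perm (Fin r × Fin p) :=
  Equiv.prodCongr (Equiv.refl (Fin r)) (finRotate p)

/-- The `R_r`-fixed basis elements of `M_{(2sp,tp,up)}`: triples `(g,T,U)` where `g`
is a product of `sp` disjoint positive 2-cycles commuting with `σ₁⋯σ_r`, and the
remaining indices are split into an `rot`-stable `tp`-set `T` and `up`-set `U`. -/
def fixedBasis (p s t u : ℕ) :
    Set (Equiv.Perm ((Fin (2 * s + t + u) × Fin p) × Bool) ×
      Finset (Fin (2 * s + t + u) × Fin p) × Finset (Fin (2 * s + t + u) × Fin p)) :=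
  {gTU |
    gTU.1 ∈ Subgroup.centralizer {barPerm (Fin (2 * s + t + u) × Fin p)} ∧
    gTU.1 * gTU.1 = 1 ∧
    (∀ y, gTU.1 y ≠ barPerm (Fin (2 * s + t + u) × Fin p) y) ∧
    (Finset.univ.filter fun i : Fin (2 * s + t + u) × Fin p =>
        gTU.1 (i, false) ≠ (i, false)).card = 2 * s * p ∧
    gTU.2.1.card = t * p ∧ gTU.2.2.card = u * p ∧
    Disjoint gTU.2.1 gTU.2.2 ∧
    (∀ i ∈ gTU.2.1, gTU.1 (i, false) = (i, false)) ∧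
    (∀ i ∈ gTU.2.2, gTU.1 (i, false) = (i, false)) ∧
    (Finset.univ.filter fun i : Fin (2 * s + t + u) × Fin p =>
        gTU.1 (i, false) ≠ (i, false)) ∪ gTU.2.1 ∪ gTU.2.2 = Finset.univ ∧
    Commute gTU.1 (rotBlocks (2 * s + t + u) p) ∧
    gTU.2.1.image (rotIdx (2 * s + t + u) p) = gTU.2.1 ∧
    gTU.2.2.image (rotIdx (2 * s + t + u) p) = gTU.2.2}


open Equiv Finset

namespace S9

lemma perm_inv_apply_self {α : Type*} (f : Perm α) (x : α) : f⁻¹ (f x) = x :=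
  f.symm_apply_apply x

lemma perm_apply_inv_self {α : Type*} (f : Perm α) (x : α) : f (f⁻¹ x) = x :=
  f.apply_symm_apply x

def unJ (s t u : ℕ) : (Fin s × Bool) ⊕ Fin (t+u) → Fin (2*s+t+u)
  | Sum.inl (a, e) => ⟨2*(a:ℕ) + (cond e 1 0), by have := a.isLt; cases e <;> simp <;> omega⟩
  | Sum.inr j => ⟨2*s + (j:ℕ), by have := j.isLt; omega⟩

@[simp] lemma unJ_inl (s t u : ℕ) (a : Fin s) (e : Bool) :
    (unJ s t u (Sum.inl (a,e)) : ℕ) = 2*(a:ℕ) + (cond e 1 0) := rfl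

@[simp] lemma unJ_inr (s t u : ℕ) (j : Fin (t+u)) :
    (unJ s t u (Sum.inr j) : ℕ) = 2*s + (j:ℕ) := rfl

/-- The index equivalence splitting `Fin (2s+t+u)` into pair-part and fixed part. -/
def eJ (s t u : ℕ) : Fin (2*s+t+u) ≃ (Fin s × Bool) ⊕ Fin (t+u) where
  toFun i := if h : (i : ℕ) < 2*s then Sum.inl (⟨(i:ℕ)/2, by omega⟩, decide ((i:ℕ)%2 = 1))
    else Sum.inr ⟨(i:ℕ) - 2*s, by have := i.isLt; omega⟩
  invFun := unJ s t u
  left_inv i := by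
    dsimp only
    by_cases h : (i:ℕ) < 2*s
    · rw [dif_pos h]
      apply Fin.ext
      rcases Nat.mod_two_eq_zero_or_one i with h2|h2 <;> simp [h2] <;> omega
    · rw [dif_neg h]
      apply Fin.ext
      have := i.isLt; simp; omega
  right_inv x := by
    dsimp only
    rcases x with ⟨a,e⟩ | j
    · have := a.isLt
      have hlt : (unJ s t u (Sum.inl (a,e)) : ℕ) < 2*s := by cases e <;> simp <;> omega
      rw [dif_pos hlt]
      congr 1
      cases e <;> simp [Prod.ext_iff, Fin.ext_iff] <;> omega
    · have := j.isLt
      rw [dif_neg (by simp)]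
      congr 1
      exact Fin.ext (by simp)

/-- Signed permutation of the pair part. -/
def signedPerm {s : ℕ} (η : Perm (Fin s)) (β : Fin s → Bool) : Perm (Fin s × Bool) where
  toFun x := (η x.1, xor x.2 (β x.1))
  invFun x := (η⁻¹ x.1, xor x.2 (β (η⁻¹ x.1)))
  left_inv x := by simp [Bool.xor_assoc]
  right_inv x := by simp [Bool.xor_assoc]

@[simp] lemma signedPerm_apply {s : ℕ} (η : Perm (Fin s)) (β : Fin s → Bool) (x : Fin s × Bool) :
    signedPerm η β x = (η x.1, xor x.2 (β x.1)) := rfl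

/-- The standard involution exchanging the two members of each pair. -/
def τ (s t u : ℕ) : Perm (Fin (2*s+t+u)) :=
  (eJ s t u).symm.permCongr (Equiv.sumCongr (signedPerm 1 (fun _ => true)) (Equiv.refl (Fin (t+u))))

/-- The "hyperoctahedral × symmetric" relabelling permutations. -/
def θ (s t u : ℕ) (η : Perm (Fin s)) (β : Fin s → Bool) (κ : Perm (Fin (t+u))) :
    Perm (Fin (2*s+t+u)) :=
  (eJ s t u).symm.permCongr (Equiv.sumCongr (signedPerm η β) κ)

lemma θ_apply (s t u : ℕ) (η β κ) (i : Fin (2*s+t+u)) :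
    θ s t u η β κ i = (eJ s t u).symm ((Equiv.sumCongr (signedPerm η β) κ) (eJ s t u i)) := by
  simp [θ, Equiv.permCongr_apply]

lemma τ_apply (s t u : ℕ) (i : Fin (2*s+t+u)) :
    τ s t u i = (eJ s t u).symm ((Equiv.sumCongr (signedPerm 1 (fun _ => true)) (Equiv.refl _)) (eJ s t u i)) := by
  simp [τ, Equiv.permCongr_apply]

lemma τ_eq_θ (s t u : ℕ) : τ s t u = θ s t u 1 (fun _ => true) 1 := rfl

lemma signedPerm_mul {s : ℕ} (η η' : Perm (Fin s)) (β β' : Fin s → Bool) :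
    signedPerm η β * signedPerm η' β' =
      signedPerm (η * η') (fun a => xor (β' a) (β (η' a))) := by
  ext x
  · simp [signedPerm, Perm.mul_apply]
  · simp [signedPerm, Perm.mul_apply, Bool.xor_assoc]

lemma signedPerm_one {s : ℕ} : signedPerm (1 : Perm (Fin s)) (fun _ => false) = 1 := by
  ext x <;> simp [signedPerm]

lemma permCongr_mul {α β : Type*} (e : α ≃ β) (g h : Perm α) :
    e.permCongr (g * h) = e.permCongr g * e.permCongr h := by
  ext x
  simp [Equiv.permCongr_apply, Perm.mul_apply]

lemma θ_mul (s t u : ℕ) (η η' : Perm (Fin s)) (β β' : Fin s → Bool)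
    (κ κ' : Perm (Fin (t+u))) :
    θ s t u η β κ * θ s t u η' β' κ' =
      θ s t u (η * η') (fun a => xor (β' a) (β (η' a))) (κ * κ') := by
  unfold θ
  rw [← permCongr_mul]
  congr 1
  rw [Equiv.Perm.sumCongr_mul, signedPerm_mul]

lemma θ_one (s t u : ℕ) : θ s t u 1 (fun _ => false) 1 = 1 := by
  unfold θ
  rw [signedPerm_one]
  ext x
  simp [Equiv.permCongr_apply]

lemma τ_sq (s t u : ℕ) : τ s t u * τ s t u = 1 := by
  rw [τ_eq_θ, θ_mul]
  simpa using θ_one s t u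

lemma θ_comm_τ (s t u : ℕ) (η : Perm (Fin s)) (β : Fin s → Bool) (κ : Perm (Fin (t+u))) :
    θ s t u η β κ * τ s t u = τ s t u * θ s t u η β κ := by
  rw [τ_eq_θ, θ_mul, θ_mul]
  simp [Bool.xor_comm]

/-- The signed/shift data attached to blocks, at the level of `J`. -/
def shJ {p s : ℕ} (k : ℕ) [NeZero p] (v : Fin s → Fin p) : (Fin s × Bool) ⊕ Fin k → Fin p :=
  Sum.elim (fun ae => cond ae.2 (-(v ae.1)) (v ae.1)) (fun _ => 0)

def csJ {s : ℕ} (k : ℕ) (sg : Fin s → Bool) : (Fin s × Bool) ⊕ Fin k → Bool :=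
  Sum.elim (fun ae => sg ae.1) (fun _ => false)

/-- Build the signed permutation of `(Fin n × Fin p) × Bool` from block data. -/
def mkPerm {n p : ℕ} [NeZero p] (f : Perm (Fin n)) (m : Fin n → Fin p) (c : Fin n → Bool) :
    Perm ((Fin n × Fin p) × Bool) where
  toFun x := ((f x.1.1, m x.1.1 + x.1.2), xor x.2 (c x.1.1))
  invFun x := ((f⁻¹ x.1.1, x.1.2 - m (f⁻¹ x.1.1)), xor x.2 (c (f⁻¹ x.1.1)))
  left_inv x := by simp [Bool.xor_assoc]
  right_inv x := by simp [Bool.xor_assoc]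

@[simp] lemma mkPerm_apply {n p : ℕ} [NeZero p] (f : Perm (Fin n)) (m : Fin n → Fin p)
    (c : Fin n → Bool) (x : (Fin n × Fin p) × Bool) :
    mkPerm f m c x = ((f x.1.1, m x.1.1 + x.1.2), xor x.2 (c x.1.1)) := rfl

lemma mkPerm_injective {n p : ℕ} [NeZero p] {f f' : Perm (Fin n)} {m m' : Fin n → Fin p}
    {c c' : Fin n → Bool} (h : mkPerm f m c = mkPerm f' m' c') :
    f = f' ∧ m = m' ∧ c = c' := by
  have key : ∀ b : Fin n, f b = f' b ∧ m b = m' b ∧ c b = c' b := by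
    intro b
    have := congrArg (fun (g : Perm ((Fin n × Fin p) × Bool)) => g ((b, 0), false)) h
    simp only [mkPerm_apply, Prod.mk.injEq, add_zero, Bool.false_xor] at this
    tauto
  refine ⟨Equiv.ext fun b => ?_, funext fun b => ?_, funext fun b => ?_⟩ <;>
    have := key b <;> tauto

@[simp] lemma barPerm_apply {α : Type*} (x : α × Bool) : _root_.barPerm α x = (x.1, !x.2) := rfl

lemma rot_apply {p : ℕ} [NeZero p] (j : Fin p) : finRotate p j = j + 1 := by
  rcases p with _ | n
  · exact absurd rfl (NeZero.ne 0)
  · exact finRotate_succ_apply j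

@[simp] lemma rotBlocks_apply {r p : ℕ} [NeZero p] (x : (Fin r × Fin p) × Bool) :
    _root_.rotBlocks r p x = ((x.1.1, x.1.2 + 1), x.2) := by
  rcases x with ⟨⟨b,j⟩,ε⟩
  simp [rotBlocks, rot_apply]

@[simp] lemma rotIdx_apply {r p : ℕ} [NeZero p] (x : Fin r × Fin p) :
    _root_.rotIdx r p x = (x.1, x.2 + 1) := by
  rcases x with ⟨b,j⟩
  simp [rotIdx, rot_apply]

lemma image_rotIdx_prod {r p : ℕ} [NeZero p] (S : Finset (Fin r)) :
    (S ×ˢ (univ : Finset (Fin p))).image (_root_.rotIdx r p) = S ×ˢ univ := by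
  ext ⟨b,j⟩
  simp only [mem_image, mem_product, mem_univ, and_true, Prod.exists]
  constructor
  · rintro ⟨b', j', hb', h⟩
    simp only [rotIdx_apply, Prod.mk.injEq] at h
    exact h.1 ▸ hb'
  · intro hb
    exact ⟨b, j - 1, hb, by simp⟩

/-- Block-level conditions. -/
structure BC (p s t u : ℕ) [NeZero p] (f : Perm (Fin (2*s+t+u))) (m : Fin (2*s+t+u) → Fin p)
    (c : Fin (2*s+t+u) → Bool) (Tb Ub : Finset (Fin (2*s+t+u))) : Prop where
  sq : f * f = 1
  supp : (univ.filter fun b => f b ≠ b).card = 2*s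
  m_fix : ∀ b, f b = b → m b = 0
  c_fix : ∀ b, f b = b → c b = false
  m_pair : ∀ b, m (f b) + m b = 0
  c_pair : ∀ b, c (f b) = c b
  tcard : Tb.card = t
  ucard : Ub.card = u
  dis : Disjoint Tb Ub
  t_fix : ∀ b ∈ Tb, f b = b
  u_fix : ∀ b ∈ Ub, f b = b
  cover : (univ.filter fun b => f b ≠ b) ∪ Tb ∪ Ub = univ

lemma ff_eq {n : ℕ} {f : Perm (Fin n)} (h : f * f = 1) (b : Fin n) : f (f b) = b := by
  have := congrArg (fun g : Perm (Fin n) => g b) h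
  simpa using this

lemma mem_fixedBasis_of_BC {p s t u : ℕ} [NeZero p] {f : Perm (Fin (2*s+t+u))}
    {m : Fin (2*s+t+u) → Fin p} {c : Fin (2*s+t+u) → Bool} {Tb Ub : Finset (Fin (2*s+t+u))}
    (H : BC p s t u f m c Tb Ub) :
    ((mkPerm f m c, Tb ×ˢ univ, Ub ×ˢ univ) : Perm ((Fin (2*s+t+u) × Fin p) × Bool) ×
        Finset (Fin (2*s+t+u) × Fin p) × Finset (Fin (2*s+t+u) × Fin p))
      ∈ _root_.fixedBasis p s t u := by
  have hmoved0 : ∀ b : Fin (2*s+t+u), ∀ j : Fin p,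
      (mkPerm f m c ((b,j), false) = ((b,j), false)) ↔ f b = b := by
    intro b j
    constructor
    · intro h
      exact congrArg (fun z : (Fin (2*s+t+u) × Fin p) × Bool => z.1.1) h
    · intro hfb
      simp [hfb, H.m_fix b hfb, H.c_fix b hfb]
  have hmoved : ∀ b : Fin (2*s+t+u), ∀ j : Fin p,
      (mkPerm f m c ((b,j), false) ≠ ((b,j), false)) ↔ f b ≠ b := by
    intro b j
    exact not_congr (hmoved0 b j)
  have hfilter : (univ.filter fun i : Fin (2*s+t+u) × Fin p =>
      mkPerm f m c (i, false) ≠ (i, false)) = (univ.filter fun b => f b ≠ b) ×ˢ univ := by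
    ext ⟨b,j⟩
    simp only [mem_filter, mem_univ, true_and, mem_product, and_true]
    exact hmoved b j
  refine ⟨?_, ?_, ?_, ?_, ?_, ?_, ?_, ?_, ?_, ?_, ?_, ?_, ?_⟩
  · -- centralizer
    rw [Subgroup.mem_centralizer_iff]
    rintro g hg
    rw [Set.mem_singleton_iff] at hg
    subst hg
    refine Equiv.ext ?_
    rintro ⟨⟨b,j⟩,ε⟩
    simp only [Perm.mul_apply, mkPerm_apply, barPerm_apply]
    cases ε <;> cases hc : c b <;> simp [hc]
  · -- involution
    refine Equiv.ext ?_
    rintro ⟨⟨b,j⟩,ε⟩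
    simp only [Perm.mul_apply, mkPerm_apply, Perm.one_apply, ff_eq H.sq, H.c_pair]
    rw [← add_assoc, H.m_pair, zero_add]
    simp [Bool.xor_assoc]
  · -- no y with g y = bar y
    rintro ⟨⟨b,j⟩,ε⟩ hy
    simp only [mkPerm_apply, barPerm_apply, Prod.mk.injEq] at hy
    obtain ⟨⟨hb, hj⟩, he⟩ := hy
    rw [H.c_fix b hb] at he
    simp at he
  · -- moved card
    rw [hfilter, Finset.card_product, H.supp]
    simp [mul_assoc]
  · simpa [Finset.card_product] using congrArg (· * p) H.tcard
  · simpa [Finset.card_product] using congrArg (· * p) H.ucard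
  · -- disjoint
    rw [Finset.disjoint_left]
    rintro ⟨b,j⟩ h1 h2
    rw [mem_product] at h1 h2
    exact (Finset.disjoint_left.mp H.dis) h1.1 h2.1
  · rintro ⟨b,j⟩ hb
    rw [mem_product] at hb
    have hfb := H.t_fix b hb.1
    simp [H.m_fix b hfb, H.c_fix b hfb, hfb]
  · rintro ⟨b,j⟩ hb
    rw [mem_product] at hb
    have hfb := H.u_fix b hb.1
    simp [H.m_fix b hfb, H.c_fix b hfb, hfb]
  · -- cover
    rw [hfilter]
    ext ⟨b,j⟩
    simp only [mem_union, mem_product, mem_univ, and_true, mem_filter, true_and]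
    have := H.cover
    rw [Finset.ext_iff] at this
    have hb := this b
    simp only [mem_union, mem_filter, mem_univ, true_and, iff_true] at hb
    tauto
  · -- commute with rotBlocks
    show _ * _ = _ * _
    refine Equiv.ext ?_
    rintro ⟨⟨b,j⟩,ε⟩
    simp [Perm.mul_apply, add_assoc]
  · exact image_rotIdx_prod Tb
  · exact image_rotIdx_prod Ub

lemma half_zero {p : ℕ} [NeZero p] (hodd : Odd p) {x : Fin p} (h : x + x = 0) : x = 0 := by
  have hv : (x.val + x.val) % p = 0 := by
    have := congrArg Fin.val h
    simpa [Fin.add_def] using this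
  have hdvd : p ∣ x.val * 2 := by
    have h2 : x.val * 2 = x.val + x.val := by omega
    rw [h2]
    exact Nat.dvd_of_mod_eq_zero hv
  have hcop : Nat.Coprime p 2 := hodd.coprime_two_right
  have hx := hcop.dvd_of_dvd_mul_right hdvd
  have hlt := x.isLt
  have hx0 : x.val = 0 := Nat.eq_zero_of_dvd_of_lt hx hlt
  exact Fin.ext (by simp [hx0])

open Fin.NatCast in
lemma stab_all {r p : ℕ} [NeZero p] {T : Finset (Fin r × Fin p)}
    (hst : T.image (_root_.rotIdx r p) = T) {b : Fin r} {j : Fin p} (hj : (b, j) ∈ T)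
    (j' : Fin p) : (b, j') ∈ T := by
  have hone : ∀ x ∈ T, (x.1, x.2 + 1) ∈ T := by
    intro x hx
    have : _root_.rotIdx r p x ∈ T.image (_root_.rotIdx r p) := mem_image_of_mem _ hx
    rw [hst] at this
    simpa using this
  have haux : ∀ n : ℕ, (b, j + (n : Fin p)) ∈ T := by
    intro n
    induction n with
    | zero => simpa using hj
    | succ n ih =>
        have := hone _ ih
        simp only at this
        have hcast : ((n+1 : ℕ) : Fin p) = (n : Fin p) + 1 := by push_cast; ring
        rw [hcast, ← add_assoc]
        exact this
  have := haux (j' - j).val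
  rwa [Fin.cast_val_eq_self, add_sub_cancel] at this

open Fin.NatCast in
/-- Forward structure theorem: every fixed basis element comes from block data. -/
lemma BC_of_mem {p s t u : ℕ} [NeZero p] (hodd : Odd p)
    {g : Perm ((Fin (2*s+t+u) × Fin p) × Bool)} {T U : Finset (Fin (2*s+t+u) × Fin p)}
    (hmem : ((g, T, U) : Perm ((Fin (2*s+t+u) × Fin p) × Bool) ×
      Finset (Fin (2*s+t+u) × Fin p) × Finset (Fin (2*s+t+u) × Fin p))
        ∈ _root_.fixedBasis p s t u) :
    ∃ f m c Tb Ub, BC p s t u f m c Tb Ub ∧ g = mkPerm f m c ∧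
      T = Tb ×ˢ univ ∧ U = Ub ×ˢ univ := by
  obtain ⟨hcen, hsq, hbar, hcard, htc, huc, hdis, htfix, hufix, hcover, hcomm, hTst, hUst⟩ := hmem
  set F0 : Fin (2*s+t+u) → Fin (2*s+t+u) := fun b => (g ((b, 0), false)).1.1 with hF0
  set M0 : Fin (2*s+t+u) → Fin p := fun b => (g ((b, 0), false)).1.2 with hM0
  set C0 : Fin (2*s+t+u) → Bool := fun b => (g ((b, 0), false)).2 with hC0
  have hbar' : ∀ x, g (x.1, !x.2) = ((g x).1, !(g x).2) := by
    intro x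
    rw [Subgroup.mem_centralizer_iff] at hcen
    have := hcen _ rfl
    have happ := congrArg (fun h : Perm ((Fin (2*s+t+u) × Fin p) × Bool) => h x) this
    simpa [Perm.mul_apply] using happ.symm
  have hrotg : ∀ x, g ((x.1.1, x.1.2 + 1), x.2) = (((g x).1.1, (g x).1.2 + 1), (g x).2) := by
    intro x
    have happ := congrArg (fun h : Perm ((Fin (2*s+t+u) × Fin p) × Bool) => h x) hcomm
    rcases x with ⟨⟨b,j⟩,ε⟩
    simp only [Perm.mul_apply, rotBlocks_apply] at happ
    rcases hgx : g ((b,j),ε) with ⟨⟨b',j'⟩,ε'⟩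
    rw [hgx] at happ
    simpa [hgx] using happ
  have hform : ∀ b j ε, g ((b,j),ε) = ((F0 b, M0 b + j), xor ε (C0 b)) := by
    have haux : ∀ (b) (n : ℕ), g ((b, (n : Fin p)), false) = ((F0 b, M0 b + (n : Fin p)), C0 b) := by
      intro b n
      induction n with
      | zero => simp; rfl
      | succ n ih =>
          have hcast : ((n+1 : ℕ) : Fin p) = (n : Fin p) + 1 := by push_cast; ring
          rw [hcast]
          have := hrotg ((b, (n : Fin p)), false)
          simp only at this
          rw [ih] at this
          simpa [add_assoc] using this
    intro b j ε
    have h0 := haux b j.val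
    rw [Fin.cast_val_eq_self] at h0
    cases ε
    · simpa using h0
    · have hb := hbar' ((b,j), false)
      simp only [Bool.not_false] at hb
      rw [h0] at hb
      simpa using hb
  have hinj : Function.Injective F0 := by
    intro b b' hFF
    by_cases hC : C0 b = C0 b'
    · have h1 : g ((b,(0:Fin p)),false) = g ((b', M0 b - M0 b'), false) := by
        rw [hform, hform, hFF, hC]
        congr 2
        rw [add_zero, add_sub_cancel]
      have h2 := g.injective h1
      simpa using congrArg (fun y : (Fin (2*s+t+u) × Fin p) × Bool => y.1.1) h2
    · have h1 : g ((b,(0:Fin p)),false) = g ((b', M0 b - M0 b'), true) := by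
        rw [hform, hform, hFF]
        have hM : M0 b + 0 = M0 b' + (M0 b - M0 b') := by rw [add_zero, add_sub_cancel]
        have hCnot : C0 b = !C0 b' := by
          cases hb : C0 b <;> cases hb' : C0 b' <;>
            first | rfl | (exfalso; exact hC (by rw [hb, hb']))
        have hCb : (false ^^ C0 b) = (true ^^ C0 b') := by
          rw [hCnot]; cases C0 b' <;> rfl
        rw [hM, hCb]
      have h2 := g.injective h1
      exact absurd (congrArg (fun y : (Fin (2*s+t+u) × Fin p) × Bool => y.2) h2) (by simp)
  let f : Perm (Fin (2*s+t+u)) := Equiv.ofBijective F0 (Finite.injective_iff_bijective.mp hinj)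
  have hf : ∀ b, f b = F0 b := fun b => rfl
  have hpair : ∀ b, F0 (F0 b) = b ∧ M0 (F0 b) + M0 b = 0 ∧ C0 (F0 b) = C0 b := by
    intro b
    have h1 : g ((b,(0:Fin p)),false) = ((F0 b, M0 b), C0 b) := by rw [hform]; simp
    have happ := congrArg (fun h : Perm ((Fin (2*s+t+u) × Fin p) × Bool) =>
      h ((b,(0:Fin p)),false)) hsq
    simp only [Perm.mul_apply, Perm.one_apply] at happ
    rw [h1, hform] at happ
    simp only [Prod.mk.injEq] at happ
    obtain ⟨⟨e1, e2⟩, e3⟩ := happ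
    refine ⟨e1, e2, ?_⟩
    cases hb : C0 b <;> rw [hb] at e3 <;> simpa using e3
  have hmfix : ∀ b, F0 b = b → M0 b = 0 := by
    intro b hb
    refine half_zero hodd ?_
    have := (hpair b).2.1
    rwa [hb] at this
  have hcfix : ∀ b, F0 b = b → C0 b = false := by
    intro b hb
    by_contra hc
    rw [Bool.not_eq_false] at hc
    apply hbar ((b,(0:Fin p)),false)
    rw [hform]
    simp [hb, hmfix b hb, hc]
  have hmoved0 : ∀ b (j : Fin p), (g ((b,j),false) = ((b,j),false)) ↔ F0 b = b := by
    intro b j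
    constructor
    · intro h
      have := congrArg (fun y : (Fin (2*s+t+u) × Fin p) × Bool => y.1.1) h
      rw [hform] at this
      exact this
    · intro hb
      rw [hform]
      simp [hb, hmfix b hb, hcfix b hb]
  have hfilter : (univ.filter fun i : Fin (2*s+t+u) × Fin p => g (i,false) ≠ (i,false))
      = (univ.filter fun b => F0 b ≠ b) ×ˢ univ := by
    ext ⟨b,j⟩
    simp only [mem_filter, mem_univ, true_and, mem_product, and_true]
    exact not_congr (hmoved0 b j)
  have hppos : 0 < p := Nat.pos_of_ne_zero (NeZero.ne p)
  have hsupp : (univ.filter fun b => F0 b ≠ b).card = 2*s := by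
    rw [hfilter, Finset.card_product, card_univ, Fintype.card_fin] at hcard
    exact Nat.eq_of_mul_eq_mul_right hppos hcard
  have hTprod : T = (T.image Prod.fst) ×ˢ univ := by
    ext ⟨b,j⟩
    simp only [mem_product, mem_univ, and_true, mem_image]
    constructor
    · intro h
      exact ⟨(b,j), h, rfl⟩
    · rintro ⟨⟨b',j'⟩, hmemT, rfl⟩
      exact stab_all hTst hmemT j
  have hUprod : U = (U.image Prod.fst) ×ˢ univ := by
    ext ⟨b,j⟩
    simp only [mem_product, mem_univ, and_true, mem_image]
    constructor
    · intro h
      exact ⟨(b,j), h, rfl⟩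
    · rintro ⟨⟨b',j'⟩, hmemT, rfl⟩
      exact stab_all hUst hmemT j
  have htb : (T.image Prod.fst).card = t := by
    rw [hTprod, Finset.card_product, card_univ, Fintype.card_fin] at htc
    exact Nat.eq_of_mul_eq_mul_right hppos htc
  have hub : (U.image Prod.fst).card = u := by
    rw [hUprod, Finset.card_product, card_univ, Fintype.card_fin] at huc
    exact Nat.eq_of_mul_eq_mul_right hppos huc
  have hTmem : ∀ b, b ∈ T.image Prod.fst ↔ (b, (0:Fin p)) ∈ T := by
    intro b
    constructor
    · intro h
      have : (b, (0:Fin p)) ∈ (T.image Prod.fst) ×ˢ univ := by simp [h]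
      rwa [← hTprod] at this
    · intro h
      exact mem_image_of_mem _ h
  have hUmem : ∀ b, b ∈ U.image Prod.fst ↔ (b, (0:Fin p)) ∈ U := by
    intro b
    constructor
    · intro h
      have : (b, (0:Fin p)) ∈ (U.image Prod.fst) ×ˢ univ := by simp [h]
      rwa [← hUprod] at this
    · intro h
      exact mem_image_of_mem _ h
  refine ⟨f, M0, C0, T.image Prod.fst, U.image Prod.fst, ⟨?_, ?_, hmfix, hcfix,
    (fun b => (hpair b).2.1), (fun b => (hpair b).2.2), htb, hub, ?_, ?_, ?_, ?_⟩, ?_, hTprod, hUprod⟩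
  · exact Equiv.ext fun b => (hpair b).1
  · exact hsupp
  · rw [Finset.disjoint_left]
    intro b h1 h2
    rw [hTmem] at h1
    rw [hUmem] at h2
    exact (Finset.disjoint_left.mp hdis) h1 h2
  · intro b hb
    rw [hTmem] at hb
    have := htfix _ hb
    exact (hmoved0 b 0).mp this
  · intro b hb
    rw [hUmem] at hb
    have := hufix _ hb
    exact (hmoved0 b 0).mp this
  · ext b
    simp only [mem_union, mem_filter, mem_univ, true_and, iff_true]
    have hc := hcover
    rw [Finset.ext_iff] at hc
    have hb := hc ((b, (0:Fin p)))
    simp only [mem_union, mem_filter, mem_univ, true_and, iff_true] at hb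
    rcases hb with (h | h) | h
    · exact Or.inl (Or.inl ((not_congr (hmoved0 b 0)).mp h))
    · exact Or.inl (Or.inr ((hTmem b).mpr h))
    · exact Or.inr ((hUmem b).mpr h)
  · refine Equiv.ext ?_
    rintro ⟨⟨b,j⟩,ε⟩
    rw [hform]
    rfl

lemma eJ_symm_eq (s t u : ℕ) : (eJ s t u).symm = unJ s t u := rfl

lemma eJ_unJ (s t u : ℕ) (x) : eJ s t u (unJ s t u x) = x := by
  rw [← eJ_symm_eq]; exact (eJ s t u).apply_symm_apply x

lemma eJ_θ_apply (s t u : ℕ) (η β κ) (i : Fin (2*s+t+u)) :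
    eJ s t u (θ s t u η β κ i) = (Equiv.sumCongr (signedPerm η β) κ) (eJ s t u i) := by
  rw [θ_apply]; exact (eJ s t u).apply_symm_apply _

lemma eJ_τ_apply (s t u : ℕ) (i : Fin (2*s+t+u)) :
    eJ s t u (τ s t u i) =
      (Equiv.sumCongr (signedPerm 1 (fun _ => true)) (Equiv.refl (Fin (t+u)))) (eJ s t u i) := by
  rw [τ_apply]; exact (eJ s t u).apply_symm_apply _

lemma τ_fix_of_inr {s t u : ℕ} {i : Fin (2*s+t+u)} {j} (h : eJ s t u i = Sum.inr j) :
    τ s t u i = i := by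
  apply (eJ s t u).injective
  rw [eJ_τ_apply, h]
  rfl

lemma τ_ne_of_inl {s t u : ℕ} {i : Fin (2*s+t+u)} {ae} (h : eJ s t u i = Sum.inl ae) :
    τ s t u i ≠ i := by
  obtain ⟨a, e⟩ := ae
  intro hfix
  have := congrArg (eJ s t u) hfix
  rw [eJ_τ_apply, h] at this
  simp only [Equiv.sumCongr_apply, Sum.map_inl, signedPerm_apply, Bool.xor_true,
    Sum.inl.injEq, Prod.mk.injEq] at this
  exact (Bool.not_ne_self e) this.2

lemma τ_fix_inr {s t u : ℕ} {i : Fin (2*s+t+u)} (h : τ s t u i = i) :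
    ∃ j, eJ s t u i = Sum.inr j := by
  rcases he : eJ s t u i with ae | j
  · exact absurd h (τ_ne_of_inl he)
  · exact ⟨j, rfl⟩

lemma τ_support_card (s t u : ℕ) : ((τ s t u).support).card = 2*s := by
  have himg : (τ s t u).support =
      (univ : Finset (Fin s × Bool)).image (fun ae => unJ s t u (Sum.inl ae)) := by
    ext i
    simp only [Perm.mem_support, mem_image, mem_univ, true_and]
    constructor
    · intro hne
      rcases he : eJ s t u i with ae | j
      · refine ⟨ae, ?_⟩
        rw [← he, ← eJ_symm_eq, Equiv.symm_apply_apply]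
      · exact absurd (τ_fix_of_inr he) hne
    · rintro ⟨ae, rfl⟩
      exact τ_ne_of_inl (eJ_unJ s t u _)
  rw [himg, Finset.card_image_of_injective _ (fun a b hab => by
    have := congrArg (eJ s t u) hab
    rw [eJ_unJ, eJ_unJ] at this
    exact Sum.inl_injective this), card_univ]
  simp [mul_comm]

lemma θ_inv (s t u : ℕ) (η β κ) :
    (θ s t u η β κ)⁻¹ = θ s t u η⁻¹ (fun a => β (η⁻¹ a)) κ⁻¹ := by
  refine inv_eq_of_mul_eq_one_right ?_
  rw [θ_mul]
  have h1 : (fun a => ((fun a => β (η⁻¹ a)) a) ^^ (β (η⁻¹ a))) = fun _ => false := by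
    funext a; simp
  simp only [mul_inv_cancel, h1]
  exact θ_one s t u

lemma θ_unJ_inr (s t u : ℕ) (η β κ) (j : Fin (t+u)) :
    θ s t u η β κ (unJ s t u (Sum.inr j)) = unJ s t u (Sum.inr (κ j)) := by
  apply (eJ s t u).injective
  rw [eJ_θ_apply, eJ_unJ, eJ_unJ]
  rfl

lemma θ_unJ_inl (s t u : ℕ) (η β κ) (a : Fin s) (e : Bool) :
    θ s t u η β κ (unJ s t u (Sum.inl (a, e))) = unJ s t u (Sum.inl (η a, xor e (β a))) := by
  apply (eJ s t u).injective
  rw [eJ_θ_apply, eJ_unJ, eJ_unJ]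
  rfl

/-- The parameter space. -/
def DD (p s t u : ℕ) : Finset (Perm (Fin (2*s+t+u)) × (Fin s → Fin p) × (Fin s → Bool) ×
    Finset (Fin (t+u))) :=
  univ ×ˢ univ ×ˢ univ ×ˢ powersetCard t univ

/-- The labelling map. -/
def Φ (p s t u : ℕ) [NeZero p]
    (d : Perm (Fin (2*s+t+u)) × (Fin s → Fin p) × (Fin s → Bool) × Finset (Fin (t+u))) :
    Perm ((Fin (2*s+t+u) × Fin p) × Bool) × Finset (Fin (2*s+t+u) × Fin p) ×
      Finset (Fin (2*s+t+u) × Fin p) :=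
  (mkPerm (d.1 * τ s t u * d.1⁻¹)
      (fun b => shJ (t+u) d.2.1 (eJ s t u (d.1⁻¹ b)))
      (fun b => csJ (t+u) d.2.2.1 (eJ s t u (d.1⁻¹ b))),
   (d.2.2.2.image (fun j => d.1 (unJ s t u (Sum.inr j)))) ×ˢ univ,
   (d.2.2.2ᶜ.image (fun j => d.1 (unJ s t u (Sum.inr j)))) ×ˢ univ)

lemma Φ_BC {p s t u : ℕ} [NeZero p] (hodd : Odd p) (π : Perm (Fin (2*s+t+u)))
    (v : Fin s → Fin p) (sg : Fin s → Bool) (T0 : Finset (Fin (t+u))) (hT0 : T0.card = t) :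
    BC p s t u (π * τ s t u * π⁻¹)
      (fun b => shJ (t+u) v (eJ s t u (π⁻¹ b)))
      (fun b => csJ (t+u) sg (eJ s t u (π⁻¹ b)))
      (T0.image (fun j => π (unJ s t u (Sum.inr j))))
      (T0ᶜ.image (fun j => π (unJ s t u (Sum.inr j)))) := by
  have hinj : Function.Injective (fun j : Fin (t+u) => π (unJ s t u (Sum.inr j))) := by
    intro a b hab
    simp only at hab
    have := π.injective hab
    have := congrArg (eJ s t u) this
    rw [eJ_unJ, eJ_unJ] at this
    exact Sum.inr_injective this
  have hfb : ∀ b, (π * τ s t u * π⁻¹) b = π (τ s t u (π⁻¹ b)) := fun b => rfl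
  have hfix_iff : ∀ b, (π * τ s t u * π⁻¹) b = b ↔ τ s t u (π⁻¹ b) = π⁻¹ b := by
    intro b
    rw [hfb]
    constructor
    · intro h
      have := congrArg (fun z => π.symm z) h
      simpa using this
    · intro h
      rw [h]
      simp
  refine ⟨?_, ?_, ?_, ?_, ?_, ?_, ?_, ?_, ?_, ?_, ?_, ?_⟩
  · -- sq
    have : π * τ s t u * π⁻¹ * (π * τ s t u * π⁻¹) = π * (τ s t u * τ s t u) * π⁻¹ := by
      group
    rw [this, τ_sq]
    group
  · -- support card
    have hsup : (univ.filter fun b => (π * τ s t u * π⁻¹) b ≠ b) =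
        (π * τ s t u * π⁻¹).support := by
      ext b
      simp only [mem_filter, mem_univ, true_and, Perm.mem_support]
    rw [hsup, Equiv.Perm.support_conj, Finset.card_map, τ_support_card]
  · -- m_fix
    intro b hb
    rw [hfix_iff] at hb
    obtain ⟨j, hj⟩ := τ_fix_inr hb
    simp only [hj]
    rfl
  · -- c_fix
    intro b hb
    rw [hfix_iff] at hb
    obtain ⟨j, hj⟩ := τ_fix_inr hb
    simp only [hj]
    rfl
  · -- m_pair
    intro b
    have hτb : π⁻¹ ((π * τ s t u * π⁻¹) b) = τ s t u (π⁻¹ b) := by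
      rw [hfb]; simp
    simp only [hτb, eJ_τ_apply]
    rcases he : eJ s t u (π⁻¹ b) with ⟨a,e⟩ | j
    · simp only [Equiv.sumCongr_apply, Sum.map_inl, signedPerm_apply, Bool.xor_true]
      cases e <;> simp [shJ]
    · simp [shJ]
  · -- c_pair
    intro b
    have hτb : π⁻¹ ((π * τ s t u * π⁻¹) b) = τ s t u (π⁻¹ b) := by
      rw [hfb]; simp
    simp only [hτb, eJ_τ_apply]
    rcases he : eJ s t u (π⁻¹ b) with ⟨a,e⟩ | j
    · simp [csJ]
    · simp [csJ]
  · -- tcard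
    rw [Finset.card_image_of_injective _ hinj, hT0]
  · -- ucard
    rw [Finset.card_image_of_injective _ hinj, Finset.card_compl, hT0]
    simp
  · -- disjoint
    rw [Finset.disjoint_left]
    rintro b hb1 hb2
    obtain ⟨j1, hj1, he1⟩ := Finset.mem_image.mp hb1
    obtain ⟨j2, hj2, he2⟩ := Finset.mem_image.mp hb2
    have : j1 = j2 := hinj (he1.trans he2.symm)
    subst this
    exact (Finset.mem_compl.mp hj2) hj1
  · -- t_fix
    intro b hb
    obtain ⟨j, _, rfl⟩ := Finset.mem_image.mp hb
    rw [hfix_iff]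
    simp only [perm_inv_apply_self]
    exact τ_fix_of_inr (eJ_unJ s t u _)
  · -- u_fix
    intro b hb
    obtain ⟨j, _, rfl⟩ := Finset.mem_image.mp hb
    rw [hfix_iff]
    simp only [perm_inv_apply_self]
    exact τ_fix_of_inr (eJ_unJ s t u _)
  · -- cover
    ext b
    simp only [mem_union, mem_filter, mem_univ, true_and, iff_true]
    rcases he : eJ s t u (π⁻¹ b) with ae | j
    · refine Or.inl (Or.inl ?_)
      rw [ne_eq, hfix_iff]
      exact τ_ne_of_inl he
    · have hb : b = π (unJ s t u (Sum.inr j)) := by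
        rw [← eJ_symm_eq]
        rw [← he]
        simp
      by_cases hj : j ∈ T0
      · exact Or.inl (Or.inr (Finset.mem_image.mpr ⟨j, hj, hb.symm⟩))
      · exact Or.inr (Finset.mem_image.mpr ⟨j, Finset.mem_compl.mpr hj, hb.symm⟩)


lemma τ_unJ_inl (s t u : ℕ) (a : Fin s) (e : Bool) :
    τ s t u (unJ s t u (Sum.inl (a, e))) = unJ s t u (Sum.inl (a, !e)) := by
  rw [τ_eq_θ, θ_unJ_inl]
  simp

lemma cycleType_of_sq_one {α : Type*} [Fintype α] [DecidableEq α] {f : Perm α}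
    (h : f * f = 1) :
    f.cycleType = Multiset.replicate (Multiset.card f.cycleType) 2 ∧
      f.support.card = 2 * Multiset.card f.cycleType := by
  have horder : orderOf f ∣ 2 := orderOf_dvd_of_pow_eq_one (by rw [pow_two, h])
  have h2 : ∀ n ∈ f.cycleType, n = 2 := by
    intro n hn
    have hle := Equiv.Perm.two_le_of_mem_cycleType hn
    have hdvd : n ∣ orderOf f := by
      rw [← Equiv.Perm.lcm_cycleType]
      exact Multiset.dvd_lcm hn
    have hn2 : n ∣ 2 := hdvd.trans horder
    have := Nat.le_of_dvd (by norm_num) hn2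
    omega
  have hrep : f.cycleType = Multiset.replicate (Multiset.card f.cycleType) 2 :=
    Multiset.eq_replicate_card.mpr h2
  refine ⟨hrep, ?_⟩
  have hsum := Equiv.Perm.sum_cycleType f
  rw [hrep] at hsum
  rw [Multiset.sum_replicate, smul_eq_mul] at hsum
  omega

lemma exists_conj {s t u : ℕ} {f : Perm (Fin (2*s+t+u))} (hsq : f * f = 1)
    (hsupp : (univ.filter fun b => f b ≠ b).card = 2*s) :
    ∃ π : Perm (Fin (2*s+t+u)), π * τ s t u * π⁻¹ = f := by
  have hsupp' : f.support.card = 2*s := by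
    have hss : f.support = univ.filter fun b => f b ≠ b := by
      ext b
      simp only [Perm.mem_support, mem_filter, mem_univ, true_and]
    rw [hss, hsupp]
  obtain ⟨hf1, hf2⟩ := cycleType_of_sq_one hsq
  obtain ⟨ht1, ht2⟩ := cycleType_of_sq_one (τ_sq s t u)
  have hcf : Multiset.card f.cycleType = s := by
    rw [hsupp'] at hf2
    omega
  have hct : Multiset.card (τ s t u).cycleType = s := by
    rw [τ_support_card] at ht2
    omega
  have hcyc : (τ s t u).cycleType = f.cycleType := by
    rw [hf1, ht1, hcf, hct]
  obtain ⟨π, hπ⟩ := isConj_iff.mp (Equiv.Perm.isConj_of_cycleType_eq hcyc)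
  exact ⟨π, hπ⟩

lemma Φ_surj {p s t u : ℕ} [NeZero p] (hodd : Odd p)
    {x : Perm ((Fin (2*s+t+u) × Fin p) × Bool) × Finset (Fin (2*s+t+u) × Fin p) ×
      Finset (Fin (2*s+t+u) × Fin p)} (hx : x ∈ _root_.fixedBasis p s t u) :
    ∃ d ∈ DD p s t u, Φ p s t u d = x := by
  obtain ⟨g, T, U⟩ := x
  obtain ⟨f, m, c, Tb, Ub, hBC, hg, hT, hU⟩ := BC_of_mem hodd hx
  obtain ⟨π, hπ⟩ := exists_conj hBC.sq hBC.supp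
  have hfb : ∀ b, f b = π (τ s t u (π⁻¹ b)) := by
    intro b
    rw [← hπ]
    rfl
  have hfix_iff : ∀ b, f b = b ↔ τ s t u (π⁻¹ b) = π⁻¹ b := by
    intro b
    rw [hfb]
    constructor
    · intro h
      have := congrArg (fun z => π.symm z) h
      simpa using this
    · intro h
      rw [h]
      simp
  have hinj : Function.Injective (fun j : Fin (t+u) => π (unJ s t u (Sum.inr j))) := by
    intro a b hab
    simp only at hab
    have h1 := π.injective hab
    have h2 := congrArg (eJ s t u) h1
    rw [eJ_unJ, eJ_unJ] at h2
    exact Sum.inr_injective h2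
  set T0 : Finset (Fin (t+u)) := univ.filter (fun j => π (unJ s t u (Sum.inr j)) ∈ Tb) with hT0def
  have hfix_unJ : ∀ j : Fin (t+u), f (π (unJ s t u (Sum.inr j))) = π (unJ s t u (Sum.inr j)) := by
    intro j
    rw [hfix_iff]
    simp only [perm_inv_apply_self]
    exact τ_fix_of_inr (eJ_unJ s t u _)
  have hfix_form : ∀ b, f b = b → ∃ j, b = π (unJ s t u (Sum.inr j)) := by
    intro b hb
    rw [hfix_iff] at hb
    obtain ⟨j, hj⟩ := τ_fix_inr hb
    refine ⟨j, ?_⟩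
    have : π⁻¹ b = unJ s t u (Sum.inr j) := by
      rw [← eJ_symm_eq, ← hj, Equiv.symm_apply_apply]
    rw [← this]
    simp
  have himgT : T0.image (fun j => π (unJ s t u (Sum.inr j))) = Tb := by
    ext b
    simp only [mem_image, hT0def, mem_filter, mem_univ, true_and]
    constructor
    · rintro ⟨j, hj, rfl⟩
      exact hj
    · intro hb
      obtain ⟨j, rfl⟩ := hfix_form b (hBC.t_fix b hb)
      exact ⟨j, hb, rfl⟩
  have himgU : T0ᶜ.image (fun j => π (unJ s t u (Sum.inr j))) = Ub := by
    ext b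
    simp only [mem_image, mem_compl, hT0def, mem_filter, mem_univ, true_and]
    constructor
    · rintro ⟨j, hj, rfl⟩
      set b := π (unJ s t u (Sum.inr j))
      have hfixb : f b = b := hfix_unJ j
      have hcov := hBC.cover
      rw [Finset.ext_iff] at hcov
      have hbcov := hcov b
      simp only [mem_union, mem_filter, mem_univ, true_and, iff_true] at hbcov
      rcases hbcov with (hmv | htb) | hub
      · exact absurd hfixb hmv
      · exact absurd htb hj
      · exact hub
    · intro hb
      obtain ⟨j, rfl⟩ := hfix_form b (hBC.u_fix b hb)
      refine ⟨j, ?_, rfl⟩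
      intro htb
      exact (Finset.disjoint_left.mp hBC.dis) htb hb
  have hm : ∀ b, shJ (t+u) (fun a => m (π (unJ s t u (Sum.inl (a, false)))))
      (eJ s t u (π⁻¹ b)) = m b := by
    intro b
    rcases he : eJ s t u (π⁻¹ b) with ⟨a,e⟩ | j
    · have hib : π⁻¹ b = unJ s t u (Sum.inl (a, e)) := by
        rw [← eJ_symm_eq, ← he, Equiv.symm_apply_apply]
      have hbval : b = π (unJ s t u (Sum.inl (a, e))) := by
        rw [← hib]; simp
      cases e
      · simp only [shJ, Sum.elim_inl, cond_false]
        rw [hbval]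
      · simp only [shJ, Sum.elim_inl, cond_true]
        have hfval : f (π (unJ s t u (Sum.inl (a, false)))) = b := by
          rw [hfb]
          simp only [perm_inv_apply_self]
          rw [τ_unJ_inl]
          rw [hbval]
          rfl
        have := hBC.m_pair (π (unJ s t u (Sum.inl (a, false))))
        rw [hfval] at this
        exact neg_eq_of_add_eq_zero_left this
    · simp only [shJ, Sum.elim_inr]
      have hfixb : f b = b := by
        rw [hfix_iff]
        exact τ_fix_of_inr he
      exact (hBC.m_fix b hfixb).symm
  have hc : ∀ b, csJ (t+u) (fun a => c (π (unJ s t u (Sum.inl (a, false)))))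
      (eJ s t u (π⁻¹ b)) = c b := by
    intro b
    rcases he : eJ s t u (π⁻¹ b) with ⟨a,e⟩ | j
    · have hib : π⁻¹ b = unJ s t u (Sum.inl (a, e)) := by
        rw [← eJ_symm_eq, ← he, Equiv.symm_apply_apply]
      have hbval : b = π (unJ s t u (Sum.inl (a, e))) := by
        rw [← hib]; simp
      cases e
      · simp only [csJ, Sum.elim_inl]
        rw [hbval]
      · simp only [csJ, Sum.elim_inl]
        have hfval : f (π (unJ s t u (Sum.inl (a, false)))) = b := by
          rw [hfb]
          simp only [perm_inv_apply_self]
          rw [τ_unJ_inl]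
          rw [hbval]
          rfl
        have := hBC.c_pair (π (unJ s t u (Sum.inl (a, false))))
        rw [hfval] at this
        exact this.symm
    · simp only [csJ, Sum.elim_inr]
      have hfixb : f b = b := by
        rw [hfix_iff]
        exact τ_fix_of_inr he
      exact (hBC.c_fix b hfixb).symm
  refine ⟨(π, fun a => m (π (unJ s t u (Sum.inl (a, false)))),
    fun a => c (π (unJ s t u (Sum.inl (a, false)))), T0), ?_, ?_⟩
  · simp only [DD, mem_product, mem_univ, true_and, Finset.mem_powersetCard_univ]
    have := congrArg Finset.card himgT
    rw [Finset.card_image_of_injective _ hinj, hBC.tcard] at this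
    exact this
  · have e1 : mkPerm (π * τ s t u * π⁻¹)
        (fun b => shJ (t+u) (fun a => m (π (unJ s t u (Sum.inl (a, false)))))
          (eJ s t u (π⁻¹ b)))
        (fun b => csJ (t+u) (fun a => c (π (unJ s t u (Sum.inl (a, false)))))
          (eJ s t u (π⁻¹ b))) = g := by
      rw [show (fun b => shJ (t+u) (fun a => m (π (unJ s t u (Sum.inl (a, false)))))
          (eJ s t u (π⁻¹ b))) = m from funext hm,
        show (fun b => csJ (t+u) (fun a => c (π (unJ s t u (Sum.inl (a, false)))))
          (eJ s t u (π⁻¹ b))) = c from funext hc, hπ]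
      exact hg.symm
    have e2 : (T0.image (fun j => π (unJ s t u (Sum.inr j)))) ×ˢ
        (univ : Finset (Fin p)) = T := by rw [himgT, hT]
    have e3 : (T0ᶜ.image (fun j => π (unJ s t u (Sum.inr j)))) ×ˢ
        (univ : Finset (Fin p)) = U := by rw [himgU, hU]
    simp only [Φ]
    exact Prod.ext e1 (Prod.ext e2 e3)


lemma SC_inl (s t u : ℕ) (z : Fin s × Bool) :
    (Equiv.sumCongr (signedPerm 1 (fun _ => true)) (Equiv.refl (Fin (t+u)))) (Sum.inl z)
      = Sum.inl (z.1, !z.2) := by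
  simp [Bool.xor_true]

lemma SC_inr (s t u : ℕ) (j : Fin (t+u)) :
    (Equiv.sumCongr (signedPerm (s := s) 1 (fun _ => true)) (Equiv.refl (Fin (t+u)))) (Sum.inr j)
      = Sum.inr j := rfl

lemma τ_unJ (s t u : ℕ) (x : (Fin s × Bool) ⊕ Fin (t+u)) :
    τ s t u (unJ s t u x) =
      unJ s t u ((Equiv.sumCongr (signedPerm 1 (fun _ => true)) (Equiv.refl (Fin (t+u)))) x) := by
  apply (eJ s t u).injective
  rw [eJ_τ_apply, eJ_unJ, eJ_unJ]

lemma θ_decomp {s t u : ℕ} {h : Perm (Fin (2*s+t+u))} (hcomm : h * τ s t u = τ s t u * h) :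
    ∃ η β κ, h = θ s t u η β κ := by
  have hKc : ∀ i, h (τ s t u i) = τ s t u (h i) := by
    intro i
    exact congrArg (fun z : Perm (Fin (2*s+t+u)) => z i) hcomm
  set H : (Fin s × Bool) ⊕ Fin (t+u) → (Fin s × Bool) ⊕ Fin (t+u) :=
    fun x => eJ s t u (h (unJ s t u x)) with hHdef
  have hHinj : Function.Injective H := by
    intro x y hxy
    simp only [hHdef] at hxy
    have h1 := (eJ s t u).injective hxy
    have h2 := h.injective h1
    have := congrArg (eJ s t u) h2
    rwa [eJ_unJ, eJ_unJ] at this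
  have hHcomm : ∀ x, H ((Equiv.sumCongr (signedPerm 1 (fun _ => true))
      (Equiv.refl (Fin (t+u)))) x) =
      (Equiv.sumCongr (signedPerm 1 (fun _ => true)) (Equiv.refl (Fin (t+u)))) (H x) := by
    intro x
    simp only [hHdef]
    rw [← τ_unJ, hKc, eJ_τ_apply]
  have hinr : ∀ j, ∃ j', H (Sum.inr j) = Sum.inr j' := by
    intro j
    rcases hy : H (Sum.inr j) with ⟨a,e⟩ | j'
    · exfalso
      have h1 := hHcomm (Sum.inr j)
      rw [SC_inr, hy, SC_inl] at h1
      simp only [Sum.inl.injEq, Prod.mk.injEq] at h1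
      exact Bool.self_ne_not e h1.2
    · exact ⟨j', rfl⟩
  have hinl : ∀ z : Fin s × Bool, ∃ w, H (Sum.inl z) = Sum.inl w := by
    intro z
    rcases hy : H (Sum.inl z) with w | j'
    · exact ⟨w, rfl⟩
    · exfalso
      have h1 := hHcomm (Sum.inl z)
      rw [SC_inl, hy, SC_inr] at h1
      have h2 : H (Sum.inl (z.1, !z.2)) = H (Sum.inl z) := by rw [hy, h1]
      have h3 := hHinj h2
      simp only [Sum.inl.injEq] at h3
      have := congrArg Prod.snd h3
      simp only at this
      exact Bool.not_ne_self z.2 this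
  choose W hW using hinl
  choose K hK2 using hinr
  have hWinj : Function.Injective W := by
    intro z z' hzz
    have : H (Sum.inl z) = H (Sum.inl z') := by rw [hW z, hW z', hzz]
    exact Sum.inl_injective (hHinj this)
  have hKinj : Function.Injective K := by
    intro j j' hjj
    have : H (Sum.inr j) = H (Sum.inr j') := by rw [hK2 j, hK2 j', hjj]
    exact Sum.inr_injective (hHinj this)
  have hWflip : ∀ z : Fin s × Bool, W (z.1, !z.2) = ((W z).1, !(W z).2) := by
    intro z
    have h1 := hHcomm (Sum.inl z)
    rw [SC_inl, hW, hW z, SC_inl] at h1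
    exact Sum.inl_injective h1
  set η0 : Fin s → Fin s := fun a => (W (a, false)).1 with hη0
  set β : Fin s → Bool := fun a => (W (a, false)).2 with hβ
  have hWfalse : ∀ a, W (a, false) = (η0 a, β a) := fun a => rfl
  have hWtrue : ∀ a, W (a, true) = (η0 a, !(β a)) := by
    intro a
    have := hWflip (a, false)
    simpa using this
  have hη0inj : Function.Injective η0 := by
    intro a a' haa
    by_cases hsnd : β a = β a'
    · have : W (a, false) = W (a', false) := by
        rw [hWfalse, hWfalse, haa, hsnd]
      have := hWinj this
      exact congrArg Prod.fst this
    · have hnot : β a = !(β a') := by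
        cases hb : β a <;> cases hb' : β a' <;>
          first | rfl | (exfalso; exact hsnd (by rw [hb, hb']))
      have : W (a, false) = W (a', true) := by
        rw [hWfalse, hWtrue, haa, hnot]
      have := hWinj this
      have := congrArg Prod.snd this
      simp at this
  let η : Perm (Fin s) := Equiv.ofBijective η0 (Finite.injective_iff_bijective.mp hη0inj)
  let κ : Perm (Fin (t+u)) := Equiv.ofBijective K (Finite.injective_iff_bijective.mp hKinj)
  refine ⟨η, β, κ, ?_⟩
  refine Equiv.ext fun i => (eJ s t u).injective ?_
  have hi : i = unJ s t u (eJ s t u i) := by rw [← eJ_symm_eq, Equiv.symm_apply_apply]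
  rw [hi, eJ_θ_apply, eJ_unJ]
  rcases hx : eJ s t u i with ⟨a,e⟩ | j
  · show H (Sum.inl (a,e)) = _
    cases e
    · rw [hW]
      simp only [Equiv.sumCongr_apply, Sum.map_inl, signedPerm_apply, Bool.false_xor]
      rw [hWfalse]
      rfl
    · rw [hW]
      simp only [Equiv.sumCongr_apply, Sum.map_inl, signedPerm_apply, Bool.true_xor]
      rw [hWtrue]
      rfl
  · show H (Sum.inr j) = _
    rw [hK2]
    rfl


lemma image_perm_compl {α : Type*} [Fintype α] [DecidableEq α] (κ : Perm α) (S : Finset α) :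
    (S.image ⇑κ)ᶜ = Sᶜ.image ⇑κ := by
  ext x
  simp only [mem_compl, mem_image]
  constructor
  · intro hx
    exact ⟨κ⁻¹ x, fun hS => hx ⟨κ⁻¹ x, hS, by simp⟩, by simp⟩
  · rintro ⟨y, hy, rfl⟩ ⟨z, hz, hzz⟩
    exact hy (by rwa [← κ.injective hzz])

lemma θ_conj_τ (s t u : ℕ) (η β κ) :
    θ s t u η β κ * τ s t u * (θ s t u η β κ)⁻¹ = τ s t u := by
  rw [θ_comm_τ]
  group

lemma pi_unJ_inr_inj {s t u : ℕ} (π : Perm (Fin (2*s+t+u))) :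
    Function.Injective (fun j : Fin (t+u) => π (unJ s t u (Sum.inr j))) := by
  intro a b hab
  simp only at hab
  have h1 := π.injective hab
  have h2 := congrArg (eJ s t u) h1
  rw [eJ_unJ, eJ_unJ] at h2
  exact Sum.inr_injective h2

lemma prod_univ_cancel {p r : ℕ} [NeZero p] {S S' : Finset (Fin r)}
    (h : S ×ˢ (univ : Finset (Fin p)) = S' ×ˢ univ) : S = S' := by
  ext b
  have hb := Finset.ext_iff.mp h (b, (0 : Fin p))
  simpa using hb

lemma θ_inj {s t u : ℕ} {η η' : Perm (Fin s)} {β β' : Fin s → Bool}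
    {κ κ' : Perm (Fin (t+u))} (h : θ s t u η β κ = θ s t u η' β' κ') :
    η = η' ∧ β = β' ∧ κ = κ' := by
  have happ : ∀ x, θ s t u η β κ (unJ s t u x) = θ s t u η' β' κ' (unJ s t u x) :=
    fun x => congrArg (fun z : Perm (Fin (2*s+t+u)) => z (unJ s t u x)) h
  have hpair : ∀ a : Fin s, (η a, β a) = (η' a, β' a) := by
    intro a
    have h1 := happ (Sum.inl (a, false))
    rw [θ_unJ_inl, θ_unJ_inl] at h1
    have h2 := congrArg (eJ s t u) h1
    rw [eJ_unJ, eJ_unJ] at h2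
    simpa using h2
  refine ⟨Equiv.ext fun a => ?_, funext fun a => ?_, Equiv.ext fun j => ?_⟩
  · exact congrArg Prod.fst (hpair a)
  · exact congrArg Prod.snd (hpair a)
  · have h1 := happ (Sum.inr j)
    rw [θ_unJ_inr, θ_unJ_inr] at h1
    have h2 := congrArg (eJ s t u) h1
    rw [eJ_unJ, eJ_unJ] at h2
    simpa using h2

lemma Φ_theta {p s t u : ℕ} [NeZero p] (π : Perm (Fin (2*s+t+u))) (v : Fin s → Fin p)
    (sg : Fin s → Bool) (T0 : Finset (Fin (t+u))) (η : Perm (Fin s)) (β : Fin s → Bool)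
    (κ : Perm (Fin (t+u))) :
    Φ p s t u (π * θ s t u η β κ,
      fun a => cond (β a) (-(v (η a))) (v (η a)),
      fun a => sg (η a), T0.image ⇑κ⁻¹) = Φ p s t u (π, v, sg, T0) := by
  have hperm : π * θ s t u η β κ * τ s t u * (π * θ s t u η β κ)⁻¹ = π * τ s t u * π⁻¹ := by
    have expand : π * θ s t u η β κ * τ s t u * (π * θ s t u η β κ)⁻¹ =
        π * (θ s t u η β κ * τ s t u * (θ s t u η β κ)⁻¹) * π⁻¹ := by group
    rw [expand, θ_conj_τ]
  have hinvapp : ∀ b, (π * θ s t u η β κ)⁻¹ b = (θ s t u η β κ)⁻¹ (π⁻¹ b) := by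
    intro b
    rw [mul_inv_rev]
    rfl
  have hm : (fun b => shJ (t+u) (fun a => cond (β a) (-(v (η a))) (v (η a)))
      (eJ s t u ((π * θ s t u η β κ)⁻¹ b))) = fun b => shJ (t+u) v (eJ s t u (π⁻¹ b)) := by
    funext b
    rw [hinvapp, θ_inv, eJ_θ_apply]
    rcases hx : eJ s t u (π⁻¹ b) with ⟨a,e⟩ | j
    · simp only [Equiv.sumCongr_apply, Sum.map_inl, signedPerm_apply, shJ, Sum.elim_inl]
      have hηa : η (η⁻¹ a) = a := perm_apply_inv_self η a
      cases hb : β (η⁻¹ a) <;> cases e <;> simp [hb, hηa, neg_neg]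
    · simp [shJ]
  have hc : (fun b => csJ (t+u) (fun a => sg (η a))
      (eJ s t u ((π * θ s t u η β κ)⁻¹ b))) = fun b => csJ (t+u) sg (eJ s t u (π⁻¹ b)) := by
    funext b
    rw [hinvapp, θ_inv, eJ_θ_apply]
    rcases hx : eJ s t u (π⁻¹ b) with ⟨a,e⟩ | j
    · simp only [Equiv.sumCongr_apply, Sum.map_inl, signedPerm_apply, csJ, Sum.elim_inl]
      rw [perm_apply_inv_self η]
    · simp [csJ]
  have hT : ∀ (S : Finset (Fin (t+u))),
      (S.image ⇑κ⁻¹).image (fun j => (π * θ s t u η β κ) (unJ s t u (Sum.inr j))) =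
        S.image (fun j => π (unJ s t u (Sum.inr j))) := by
    intro S
    rw [Finset.image_image]
    refine Finset.image_congr fun j _ => ?_
    simp only [Function.comp_apply, Perm.mul_apply]
    rw [θ_unJ_inr, perm_apply_inv_self κ]
  have e1 : mkPerm (π * θ s t u η β κ * τ s t u * (π * θ s t u η β κ)⁻¹)
      (fun b => shJ (t+u) (fun a => cond (β a) (-(v (η a))) (v (η a)))
        (eJ s t u ((π * θ s t u η β κ)⁻¹ b)))
      (fun b => csJ (t+u) (fun a => sg (η a)) (eJ s t u ((π * θ s t u η β κ)⁻¹ b))) =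
      mkPerm (π * τ s t u * π⁻¹) (fun b => shJ (t+u) v (eJ s t u (π⁻¹ b)))
        (fun b => csJ (t+u) sg (eJ s t u (π⁻¹ b))) := by
    rw [hm, hc, hperm]
  have e2 : ((T0.image ⇑κ⁻¹).image (fun j => (π * θ s t u η β κ) (unJ s t u (Sum.inr j)))) ×ˢ
      (univ : Finset (Fin p)) = (T0.image (fun j => π (unJ s t u (Sum.inr j)))) ×ˢ univ := by
    rw [hT]
  have e3 : ((T0.image ⇑κ⁻¹)ᶜ.image (fun j => (π * θ s t u η β κ) (unJ s t u (Sum.inr j)))) ×ˢ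
      (univ : Finset (Fin p)) = (T0ᶜ.image (fun j => π (unJ s t u (Sum.inr j)))) ×ˢ univ := by
    rw [image_perm_compl, hT]
  simp only [Φ]
  exact Prod.ext e1 (Prod.ext e2 e3)


lemma fiber_card {p s t u : ℕ} [NeZero p]
    (d₀ : Perm (Fin (2*s+t+u)) × (Fin s → Fin p) × (Fin s → Bool) × Finset (Fin (t+u)))
    (hd₀ : d₀ ∈ DD p s t u) :
    ((DD p s t u).filter (fun d => Φ p s t u d = Φ p s t u d₀)).card =
      s.factorial * (2^s * (t+u).factorial) := by
  obtain ⟨π₀, v₀, sg₀, T0⟩ := d₀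
  have hT0 : T0.card = t := by
    simp only [DD, mem_product, mem_univ, true_and, Finset.mem_powersetCard_univ] at hd₀
    exact hd₀
  have hbij := Finset.card_bij
    (s := (univ : Finset (Perm (Fin s) × (Fin s → Bool) × Perm (Fin (t+u)))))
    (t := (DD p s t u).filter (fun d => Φ p s t u d = Φ p s t u (π₀, v₀, sg₀, T0)))
    (fun k _ => (π₀ * θ s t u k.1 k.2.1 k.2.2,
      fun a => cond (k.2.1 a) (-(v₀ (k.1 a))) (v₀ (k.1 a)),
      fun a => sg₀ (k.1 a), T0.image ⇑k.2.2⁻¹))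
    (by
      rintro ⟨η, β, κ⟩ _
      rw [Finset.mem_filter]
      constructor
      · simp only [DD, mem_product, mem_univ, true_and, Finset.mem_powersetCard_univ]
        rw [Finset.card_image_of_injective _ (Equiv.injective _), hT0]
      · exact Φ_theta π₀ v₀ sg₀ T0 η β κ)
    (by
      rintro ⟨η, β, κ⟩ _ ⟨η', β', κ'⟩ _ heq
      have h1 := congrArg Prod.fst heq
      simp only at h1
      have h2 := mul_left_cancel h1
      obtain ⟨hη, hβ, hκ⟩ := θ_inj h2
      simp [Prod.ext_iff, hη, hβ, hκ])
    (by
      rintro ⟨π, v, sg, T1⟩ hd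
      rw [Finset.mem_filter] at hd
      obtain ⟨hdDD, hΦ⟩ := hd
      simp only [Φ] at hΦ
      have h1 := congrArg Prod.fst hΦ
      have h2 := congrArg (fun z : Perm ((Fin (2*s+t+u) × Fin p) × Bool) ×
        Finset (Fin (2*s+t+u) × Fin p) × Finset (Fin (2*s+t+u) × Fin p) => z.2.1) hΦ
      simp only at h1 h2
      obtain ⟨hfeq, hmeq, hceq⟩ := mkPerm_injective h1
      have hcomm : (π₀⁻¹ * π) * τ s t u = τ s t u * (π₀⁻¹ * π) := by
        have key : (π₀⁻¹ * π) * τ s t u * (π₀⁻¹ * π)⁻¹ = τ s t u := by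
          have expand : (π₀⁻¹ * π) * τ s t u * (π₀⁻¹ * π)⁻¹ =
              π₀⁻¹ * (π * τ s t u * π⁻¹) * π₀ := by group
          rw [expand, hfeq]
          group
        have := congrArg (fun z => z * (π₀⁻¹ * π)) key
        simpa [mul_assoc] using this
      obtain ⟨η, β, κ, hθ⟩ := θ_decomp hcomm
      have hπ : π = π₀ * θ s t u η β κ := by
        rw [← hθ]
        group
      have happθ : ∀ x, π₀⁻¹ (π (unJ s t u x)) = θ s t u η β κ (unJ s t u x) := by
        intro x
        rw [← hθ]
        rfl
      have hv : v = fun a => cond (β a) (-(v₀ (η a))) (v₀ (η a)) := by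
        funext a
        have hb := congrFun hmeq (π (unJ s t u (Sum.inl (a, false))))
        rw [perm_inv_apply_self] at hb
        have hrhs : π₀⁻¹ (π (unJ s t u (Sum.inl (a, false)))) =
            unJ s t u (Sum.inl (η a, β a)) := by
          rw [happθ, θ_unJ_inl]
          simp
        rw [hrhs] at hb
        rw [eJ_unJ, eJ_unJ] at hb
        simpa [shJ] using hb
      have hsg : sg = fun a => sg₀ (η a) := by
        funext a
        have hb := congrFun hceq (π (unJ s t u (Sum.inl (a, false))))
        rw [perm_inv_apply_self] at hb
        have hrhs : π₀⁻¹ (π (unJ s t u (Sum.inl (a, false)))) =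
            unJ s t u (Sum.inl (η a, β a)) := by
          rw [happθ, θ_unJ_inl]
          simp
        rw [hrhs] at hb
        rw [eJ_unJ, eJ_unJ] at hb
        simpa [csJ] using hb
      have himg : T1.image (fun j => π (unJ s t u (Sum.inr j))) =
          T0.image (fun j => π₀ (unJ s t u (Sum.inr j))) := prod_univ_cancel h2
      have hπj : ∀ j, π (unJ s t u (Sum.inr j)) = π₀ (unJ s t u (Sum.inr (κ j))) := by
        intro j
        rw [hπ]
        simp only [Perm.mul_apply]
        rw [θ_unJ_inr]
      have hT1 : T1 = T0.image ⇑κ⁻¹ := by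
        ext j
        constructor
        · intro hj
          have : π (unJ s t u (Sum.inr j)) ∈ T0.image (fun j => π₀ (unJ s t u (Sum.inr j))) := by
            rw [← himg]
            exact mem_image_of_mem _ hj
          obtain ⟨j₀, hj₀, hjeq⟩ := Finset.mem_image.mp this
          rw [hπj] at hjeq
          have : j₀ = κ j := pi_unJ_inr_inj π₀ hjeq
          rw [this] at hj₀
          exact Finset.mem_image.mpr ⟨κ j, hj₀, by simp⟩
        · intro hj
          obtain ⟨j₀, hj₀, rfl⟩ := Finset.mem_image.mp hj
          have hmem : π₀ (unJ s t u (Sum.inr j₀)) ∈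
              T1.image (fun j => π (unJ s t u (Sum.inr j))) := by
            rw [himg]
            exact mem_image_of_mem _ hj₀
          obtain ⟨j₁, hj₁, hjeq⟩ := Finset.mem_image.mp hmem
          rw [hπj] at hjeq
          have hj₀eq : κ j₁ = j₀ := pi_unJ_inr_inj π₀ hjeq
          have : j₁ = κ⁻¹ j₀ := by rw [← hj₀eq]; simp
          rwa [← this]
      refine ⟨(η, β, κ), mem_univ _, ?_⟩
      exact Prod.ext hπ.symm (Prod.ext hv.symm (Prod.ext hsg.symm hT1.symm)))
  rw [← hbij, card_univ]
  simp [Fintype.card_perm]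


lemma Φ_mem {p s t u : ℕ} [NeZero p] (hodd : Odd p)
    (d : Perm (Fin (2*s+t+u)) × (Fin s → Fin p) × (Fin s → Bool) × Finset (Fin (t+u)))
    (hd : d ∈ DD p s t u) : Φ p s t u d ∈ _root_.fixedBasis p s t u := by
  have hT0 : d.2.2.2.card = t := by
    simp only [DD, mem_product, mem_univ, true_and, Finset.mem_powersetCard_univ] at hd
    exact hd
  exact mem_fixedBasis_of_BC (Φ_BC hodd d.1 d.2.1 d.2.2.1 d.2.2.2 hT0)

lemma DD_card (p s t u : ℕ) :
    (DD p s t u).card = (2*s+t+u).factorial * (p^s * (2^s * (t+u).choose t)) := by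
  simp only [DD, Finset.card_product, card_univ, Fintype.card_perm, Fintype.card_fin,
    Fintype.card_fun, Fintype.card_bool, Finset.card_powersetCard, Finset.card_fin]
  try ring

end S9

/-- `dim M_{(2sp,tp,up)}(R_r) = (2p)^s · C(t+u,t) · c_{s,t+u}` where
`c_{s,k} = (2s+k)!/(2^s s! k!)`, stated in multiplied-out form. -/
theorem dim_brauer_quotient (p s t u : ℕ) (hp : p.Prime) (hodd : Odd p) :
    Nat.card (fixedBasis p s t u) * (2 ^ s * s.factorial * (t + u).factorial) =
      (2 * p) ^ s * (t + u).choose t * (2 * s + (t + u)).factorial := by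
  classical
  haveI : NeZero p := ⟨hp.ne_zero⟩
  open S9 Finset Equiv in
  set F : Finset (Equiv.Perm ((Fin (2 * s + t + u) × Fin p) × Bool) ×
      Finset (Fin (2 * s + t + u) × Fin p) × Finset (Fin (2 * s + t + u) × Fin p)) :=
    Finset.univ.filter (· ∈ fixedBasis p s t u) with hF
  have hcard1 : Nat.card (fixedBasis p s t u) = F.card := by
    rw [hF, Nat.card_eq_fintype_card]
    exact Fintype.card_subtype _
  have hmain : (S9.DD p s t u).card = F.card *
      (s.factorial * (2^s * (t + u).factorial)) := by
    have hmem : ∀ d ∈ S9.DD p s t u, S9.Φ p s t u d ∈ F := by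
      intro d hd
      rw [hF, Finset.mem_filter]
      exact ⟨Finset.mem_univ _, S9.Φ_mem hodd d hd⟩
    rw [Finset.card_eq_sum_card_fiberwise hmem]
    have hstep : ∀ x ∈ F, ((S9.DD p s t u).filter (fun d => S9.Φ p s t u d = x)).card =
        s.factorial * (2^s * (t + u).factorial) := by
      intro x hx
      have hxmem : x ∈ fixedBasis p s t u := by
        rw [hF, Finset.mem_filter] at hx
        exact hx.2
      obtain ⟨d₀, hd₀, hΦd₀⟩ := S9.Φ_surj hodd hxmem
      rw [← hΦd₀]
      exact S9.fiber_card d₀ hd₀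
    rw [Finset.sum_congr rfl hstep, Finset.sum_const, smul_eq_mul]
  have hDD := S9.DD_card p s t u
  have hkey : F.card * (s.factorial * (2^s * (t + u).factorial)) =
      (2*s+t+u).factorial * (p^s * (2^s * (t + u).choose t)) := by
    rw [← hmain, hDD]
  have hr : 2 * s + (t + u) = 2*s+t+u := by omega
  rw [hcard1, hr]
  calc F.card * (2 ^ s * s.factorial * (t + u).factorial)
      = F.card * (s.factorial * (2^s * (t + u).factorial)) := by ring
    _ = (2*s+t+u).factorial * (p^s * (2^s * (t + u).choose t)) := hkey
    _ = (2 * p) ^ s * (t + u).choose t * (2*s+t+u).factorial := by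
        rw [mul_pow]
        ring
end

section
/- Let $p$ be an odd prime and $r = 2s + t + u$. If $v = (g,\gamma,\delta)$ is a basis element of $\mathcal B_{(2sp,tp,up)}$ fixed under the action of $R_r = \langle\sigma_1\cdots\sigma_r\rangle$, then the number of nontrivial $\widehat{R_r}$-orbits contained in the support $\mathcal S(v)$ of the involution $g$ is even. -/
/-- A finset closed under a fixed-point-free involution has even cardinality. -/
lemma even_card_of_fpf_invol {α : Type*} [DecidableEq α] (f : α → α) :
    ∀ S : Finset α, (∀ a ∈ S, f a ∈ S) → (∀ a ∈ S, f (f a) = a) →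
      (∀ a ∈ S, f a ≠ a) → Even S.card := by
  intro S
  induction S using Finset.strongInduction with
  | _ S ih =>
    intro h1 h2 h3
    rcases S.eq_empty_or_nonempty with rfl | ⟨a, ha⟩
    · simp
    · have hfa : f a ∈ S := h1 a ha
      have hne : f a ≠ a := h3 a ha
      set S' := (S.erase a).erase (f a) with hS'
      have hsub : S' ⊂ S := by
        refine Finset.ssubset_of_subset_of_ssubset ?_ (Finset.erase_ssubset ha)
        exact Finset.erase_subset _ _
      have hmem : ∀ b, b ∈ S' ↔ b ∈ S ∧ b ≠ a ∧ b ≠ f a := by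
        intro b
        simp [hS', Finset.mem_erase, and_comm, and_left_comm]
        tauto
      have h1' : ∀ b ∈ S', f b ∈ S' := by
        intro b hb
        rw [hmem] at hb ⊢
        obtain ⟨hbS, hba, hbfa⟩ := hb
        refine ⟨h1 b hbS, ?_, ?_⟩
        · intro h; apply hbfa; rw [← h, h2 b hbS]
        · intro h
          have := congrArg f h
          rw [h2 b hbS, h2 a ha] at this
          exact hba this
      have h2' : ∀ b ∈ S', f (f b) = b := fun b hb => h2 b ((hmem b).1 hb).1
      have h3' : ∀ b ∈ S', f b ≠ b := fun b hb => h3 b ((hmem b).1 hb).1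
      have hcard : S.card = S'.card + 2 := by
        have h1c : (S.erase a).card = S.card - 1 := Finset.card_erase_of_mem ha
        have h2c : S'.card = (S.erase a).card - 1 :=
          Finset.card_erase_of_mem (Finset.mem_erase.mpr ⟨hne, hfa⟩)
        have hpos : 1 ≤ S.card := Finset.card_pos.mpr ⟨a, ha⟩
        have hpos2 : 2 ≤ S.card := by
          have : ({a, f a} : Finset α) ⊆ S := by
            intro x hx; rcases Finset.mem_insert.mp hx with rfl | hx
            · exact ha
            · rw [Finset.mem_singleton] at hx; subst hx; exact hfa
          calc 2 = ({a, f a} : Finset α).card := by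
                  rw [Finset.card_insert_of_notMem (by simp [Ne.symm hne]),
                    Finset.card_singleton]
            _ ≤ S.card := Finset.card_le_card this
        omega
      rw [hcard]
      exact (ih S' hsub h1' h2' h3').add (by norm_num)

open Fin.NatCast in
lemma aux_main (n r : ℕ) (hp : (n+1).Prime) (hodd : Odd (n+1))
    (g : Equiv.Perm ((Fin r × Fin (n+1)) × Bool))
    (hbar : ∀ x, g (barPerm (Fin r × Fin (n+1)) x) = barPerm (Fin r × Fin (n+1)) (g x))
    (hinv : ∀ x, g (g x) = x)
    (hpos : ∀ y, g y ≠ barPerm (Fin r × Fin (n+1)) y)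
    (hcomm : ∀ (k : ℕ) x, g (((rotBlocks r (n+1)) ^ k) x) = ((rotBlocks r (n+1)) ^ k) (g x)) :
    Even (Finset.univ.filter fun j : Fin r =>
        ∀ i : Fin (n+1), g ((j, i), false) ≠ ((j, i), false)).card := by
  have hrot : ∀ (k : ℕ) (j : Fin r) (i : Fin (n+1)) (b : Bool),
      ((rotBlocks r (n+1)) ^ k) ((j, i), b) = ((j, i + (k : Fin (n+1))), b) := by
    intro k
    induction k with
    | zero => intro j i b; simp
    | succ k ih =>
      intro j i b
      rw [pow_succ', Equiv.Perm.mul_apply, ih]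
      simp only [rotBlocks, Equiv.prodCongr_apply, Prod.map, Equiv.refl_apply,
        finRotate_succ_apply]
      have : i + ((k : ℕ) + 1 : ℕ) = i + (k : Fin (n+1)) + 1 := by rw [Nat.cast_succ, add_assoc]
      rw [this]
  -- key decomposition
  have hK : ∀ (j : Fin r) (i : Fin (n+1)) (b : Bool),
      g ((j, i), b) = ((rotBlocks r (n+1)) ^ (i.val)) (g ((j, 0), b)) := by
    intro j i b
    have h1 : ((rotBlocks r (n+1)) ^ (i.val)) ((j, (0 : Fin (n+1))), b) = ((j, i), b) := by
      rw [hrot]; simp [Fin.cast_val_eq_self]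
    rw [← h1, hcomm]
  -- bar fact
  have hbar0 : ∀ (j : Fin r) (i : Fin (n+1)),
      barPerm (Fin r × Fin (n+1)) ((j, i), false) = ((j, i), true) := by
    intro j i; rfl
  -- the block of g ((j,i),b) is independent of i and b
  have hblock : ∀ (j : Fin r) (i : Fin (n+1)) (b : Bool),
      (g ((j, i), b)).1.1 = (g ((j, 0), false)).1.1 := by
    intro j i b
    have h1 : ∀ (b : Bool) (i : Fin (n+1)), (g ((j, i), b)).1.1 = (g ((j, 0), b)).1.1 := by
      intro b i
      rw [hK j i b]
      obtain ⟨⟨j', i'⟩, b'⟩ := g ((j, 0), b)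
      rw [hrot]
    rw [h1]
    cases b with
    | false => rfl
    | true =>
      have : g ((j, 0), true) = barPerm (Fin r × Fin (n+1)) (g ((j, 0), false)) := by
        rw [← hbar0 j 0, hbar]
      rw [this]
      obtain ⟨⟨j', i'⟩, b'⟩ := g ((j, 0), false)
      rfl
  -- doubling kills: i + i = 0 implies i = 0
  have hdouble : ∀ i : Fin (n+1), i + i = 0 → i = 0 := by
    intro i hi
    have hv : (i.val + i.val) % (n+1) = 0 := by
      have := congrArg Fin.val hi
      rwa [Fin.val_add, Fin.val_zero] at this
    have hdvd : (n+1) ∣ 2 * i.val := by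
      rw [two_mul]; exact Nat.dvd_of_mod_eq_zero hv
    have h2 : ¬ (n+1) ∣ 2 := by
      intro h
      have hle := Nat.le_of_dvd (by norm_num) h
      have : n ≤ 1 := by omega
      interval_cases n
      · exact absurd hp (by norm_num)
      · exact absurd hodd (by norm_num)
    have hdvdi : (n+1) ∣ i.val := ((Nat.Prime.dvd_mul hp).mp hdvd).resolve_left h2
    have h0 : i.val = 0 := Nat.eq_zero_of_dvd_of_lt hdvdi i.isLt
    exact Fin.ext (by simp [h0])
  -- the induced map on blocks
  set f : Fin r → Fin r := fun j => (g ((j, 0), false)).1.1 with hf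
  have hinvol : ∀ j : Fin r, f (f j) = j := by
    intro j
    have h1 := hblock (f j) (g ((j,0),false)).1.2 (g ((j,0),false)).2
    have h2 : ((f j, (g ((j,0),false)).1.2), (g ((j,0),false)).2) = g ((j,0),false) := rfl
    rw [h2, hinv] at h1
    exact h1.symm
  have hfpf : ∀ j : Fin r, g ((j,(0:Fin (n+1))),false) ≠ ((j,0),false) → f j ≠ j := by
    intro j hj hfj
    rcases hgy : g ((j,(0:Fin (n+1))),false) with ⟨⟨j', i₀⟩, b₀⟩
    have hj' : j' = j := by
      have : f j = j' := by rw [hf]; simp only; rw [hgy]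
      rw [this] at hfj; exact hfj
    subst hj'
    cases b₀ with
    | false =>
      have h3 : g ((j',i₀),false) = ((j', i₀ + i₀), false) := by
        rw [hK, hgy, hrot]
        simp [Fin.cast_val_eq_self]
      have h4 : g ((j',i₀),false) = ((j',0),false) := by rw [← hgy, hinv]
      rw [h3] at h4
      have h6 : i₀ + i₀ = 0 := by
        simpa [Prod.ext_iff] using h4
      have h7 := hdouble _ h6
      exact hj (by rw [hgy, h7])
    | true =>
      have h5 : g ((j',(0:Fin (n+1))),true) = ((j', i₀), false) := by
        rw [← hbar0 j' 0, hbar, hgy]; rfl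
      have h3 : g ((j',i₀),true) = ((j', i₀ + i₀), false) := by
        rw [hK, h5, hrot]
        simp [Fin.cast_val_eq_self]
      have h4 : g ((j',i₀),true) = ((j',0),false) := by rw [← hgy, hinv]
      rw [h3] at h4
      have h6 : i₀ + i₀ = 0 := by
        simpa [Prod.ext_iff] using h4
      have h7 := hdouble _ h6
      exact hpos ((j',0),false) (by rw [hgy, h7, hbar0])
  have hS : ∀ j : Fin r, (∀ i, g ((j,i),false) ≠ ((j,i),false)) ↔
      g ((j,(0:Fin (n+1))),false) ≠ ((j,0),false) := by
    intro j
    constructor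
    · intro h; exact h 0
    · intro h i heq
      apply h
      have h2 : ((rotBlocks r (n+1)) ^ i.val) ((j,(0:Fin (n+1))),false) = ((j,i),false) := by
        rw [hrot]; simp [Fin.cast_val_eq_self]
      have h3 : ((rotBlocks r (n+1)) ^ i.val) (g ((j,(0:Fin (n+1))),false)) =
          ((rotBlocks r (n+1)) ^ i.val) ((j,(0:Fin (n+1))),false) := by
        rw [← hK, heq, h2]
      exact Equiv.injective _ h3
  classical
  apply even_card_of_fpf_invol f
  · intro j hj
    rw [Finset.mem_filter] at hj ⊢
    refine ⟨Finset.mem_univ _, ?_⟩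
    rw [hS]
    intro heq
    have h1 : (g ((f j,(0:Fin (n+1))),false)).1.1 = j := hinvol j
    rw [heq] at h1
    exact hfpf j ((hS j).mp hj.2) h1
  · intro j _; exact hinvol j
  · intro j hj
    rw [Finset.mem_filter] at hj
    exact hfpf j ((hS j).mp hj.2)

theorem support_orbits_even (p s t u : ℕ) (hp : p.Prime) (hodd : Odd p)
    (g : Equiv.Perm ((Fin (2 * s + t + u) × Fin p) × Bool))
    (hbar : g ∈ Subgroup.centralizer {barPerm (Fin (2 * s + t + u) × Fin p)})
    (hinv : g * g = 1)
    (hpos : ∀ y, g y ≠ barPerm (Fin (2 * s + t + u) × Fin p) y)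
    (hsupp : (Finset.univ.filter fun i : Fin (2 * s + t + u) × Fin p =>
        g (i, false) ≠ (i, false)).card = 2 * s * p)
    (hfix : Commute g (rotBlocks (2 * s + t + u) p)) :
    Even (Finset.univ.filter fun j : Fin (2 * s + t + u) =>
        ∀ i : Fin p, g ((j, i), false) ≠ ((j, i), false)).card := by
  obtain ⟨n, rfl⟩ : ∃ n, p = n + 1 := ⟨p - 1, (Nat.succ_pred_eq_of_pos hp.pos).symm⟩
  apply aux_main n (2 * s + t + u) hp hodd g
  · intro x
    have h := Subgroup.mem_centralizer_iff.mp hbar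
      (barPerm (Fin (2 * s + t + u) × Fin (n+1))) rfl
    have := DFunLike.congr_fun h x
    simpa [Equiv.Perm.mul_apply] using this.symm
  · intro x
    have := DFunLike.congr_fun hinv x
    simpa [Equiv.Perm.mul_apply] using this
  · exact hpos
  · intro k x
    have := DFunLike.congr_fun (hfix.pow_right k).eq x
    simpa [Equiv.Perm.mul_apply] using this
end
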